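/- arXiv:1507.04944 — 5 statements merged into one kernel-verified Lean document; each statement's English description precedes it below -/
import Mathlib

section
/- Let H be a graph. (i) If H contains no (not necessarily induced) subgraph isomorphic to the path P_4 on four vertices, then H is a disjoint union of stars and triangles. (ii) If for every subgraph of H isomorphic to P_4 the four vertices of that path induce a complete graph K_4 in H, then H is a disjoint union of stars and cliques. (iii) If for every subgraph of H isomorphic to P_4 the four vertices of that path induce in H either K_4 or K_4 minus one edge, then H is a disjoint union of suns. -/
open SimpleGraph

def InducedC2kFree (k : ℕ) {n : ℕ} (G : SimpleGraph (Fin n)) : Prop :=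
  ¬ Nonempty ((cycleGraph (2 * k)) ↪g G)

def IsStarGraph {W : Type*} (H : SimpleGraph W) : Prop :=
  {v : W | ∃ a b, a ≠ b ∧ H.Adj v a ∧ H.Adj v b}.Subsingleton

def IsCliqueGraph {W : Type*} (H : SimpleGraph W) : Prop :=
  ∀ u v : W, u ≠ v → H.Adj u v

def IsTriangleGraph {W : Type*} (H : SimpleGraph W) : Prop :=
  Nat.card W = 3 ∧ IsCliqueGraph H

def IsSunGraph {W : Type*} (H : SimpleGraph W) : Prop :=
  ∃ B : Set W, ∀ u v : W, H.Adj u v ↔ u ≠ v ∧ ¬(u ∈ B ∧ v ∈ B)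

def UnionOfStarsAndTriangles {W : Type*} (H : SimpleGraph W) : Prop :=
  ∀ c : H.ConnectedComponent,
    IsStarGraph (H.induce c.supp) ∨ IsTriangleGraph (H.induce c.supp)

def UnionOfStarsAndCliques {W : Type*} (H : SimpleGraph W) : Prop :=
  ∀ c : H.ConnectedComponent,
    IsStarGraph (H.induce c.supp) ∨ IsCliqueGraph (H.induce c.supp)

def UnionOfCliques {W : Type*} (H : SimpleGraph W) : Prop :=
  ∀ c : H.ConnectedComponent, IsCliqueGraph (H.induce c.supp)

def UnionOfSuns {W : Type*} (H : SimpleGraph W) : Prop :=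
  ∀ c : H.ConnectedComponent, IsSunGraph (H.induce c.supp)

def IsPartition {n m : ℕ} (Q : Fin m → Set (Fin n)) : Prop :=
  ∀ x : Fin n, ∃! i, x ∈ Q i

def TemplateClassProp (k : ℕ) {W : Type*} (H : SimpleGraph W) : Prop :=
  if k = 4 then UnionOfSuns H
  else if k = 5 then UnionOfStarsAndCliques H
  else UnionOfStarsAndTriangles H

def IsKTemplateOn (k : ℕ) {n : ℕ} (G : SimpleGraph (Fin n))
    (Q : Fin (k - 1) → Set (Fin n)) : Prop :=
  IsPartition Q ∧
  (∀ i : Fin (k - 1), (i : ℕ) ≠ 0 → IsCliqueGraph (G.induce (Q i))) ∧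
  (∀ i : Fin (k - 1), (i : ℕ) = 0 → TemplateClassProp k ((G.induce (Q i))ᶜ))

def IsKTemplate (k : ℕ) {n : ℕ} (G : SimpleGraph (Fin n)) : Prop :=
  ∃ Q : Fin (k - 1) → Set (Fin n), IsKTemplateOn k G Q

noncomputable def turanEdges (m n : ℕ) : ℕ :=
  Nat.card (SimpleGraph.turanGraph n m).edgeSet

def IsKSun (k : ℕ) {W : Type*} (H : SimpleGraph W) : Prop :=
  if k = 4 then IsSunGraph H
  else if k = 5 then IsStarGraph H ∨ IsCliqueGraph H
  else IsStarGraph H ∨ IsTriangleGraph H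

def UnionOfKSuns (k : ℕ) {W : Type*} (H : SimpleGraph W) : Prop :=
  ∀ c : H.ConnectedComponent, IsKSun k (H.induce c.supp)

noncomputable def fk (k n : ℕ) : ℕ :=
  Nat.card {G : SimpleGraph (Fin n) // UnionOfKSuns k Gᶜ}

noncomputable def internalNonEdges (k : ℕ) {n : ℕ} (G : SimpleGraph (Fin n))
    (Q : Fin (k - 1) → Set (Fin n)) : ℕ :=
  ∑ i : Fin (k - 1), Nat.card ((G.induce (Q i))ᶜ.edgeSet)

def IsOptimalPartition (k : ℕ) {n : ℕ} (G : SimpleGraph (Fin n))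
    (Q : Fin (k - 1) → Set (Fin n)) : Prop :=
  IsPartition Q ∧ ∀ Q' : Fin (k - 1) → Set (Fin n), IsPartition Q' →
    internalNonEdges k G Q ≤ internalNonEdges k G Q'

def MemFQeta (k : ℕ) (η : ℝ) {n : ℕ} (G : SimpleGraph (Fin n))
    (Q : Fin (k - 1) → Set (Fin n)) : Prop :=
  InducedC2kFree k G ∧ IsOptimalPartition k G Q ∧
    (internalNonEdges k G Q : ℝ) ≤ η * n ^ 2

noncomputable def eBetween {n : ℕ} (G : SimpleGraph (Fin n)) (A B : Set (Fin n)) : ℕ :=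
  Nat.card {p : Fin n × Fin n // p.1 ∈ A ∧ p.2 ∈ B ∧ G.Adj p.1 p.2}

def PropF1 (k : ℕ) (ν : ℝ) {n : ℕ} (G : SimpleGraph (Fin n))
    (Q : Fin (k - 1) → Set (Fin n)) : Prop :=
  ∀ i j : Fin (k - 1), i ≠ j → ∀ Ui Uj : Set (Fin n), Ui ⊆ Q i → Uj ⊆ Q j →
    ν ^ 2 * (n : ℝ) ^ 2 ≤ (Ui.ncard : ℝ) * (Uj.ncard : ℝ) →
    (1 / 4 : ℝ) ≤ (eBetween G Ui Uj : ℝ) / ((Ui.ncard : ℝ) * (Uj.ncard : ℝ)) ∧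
      (eBetween G Ui Uj : ℝ) / ((Ui.ncard : ℝ) * (Uj.ncard : ℝ)) ≤ 3 / 4

def PropF2 (k : ℕ) (ν : ℝ) {n : ℕ} (Q : Fin (k - 1) → Set (Fin n)) : Prop :=
  ∀ i : Fin (k - 1), |((Q i).ncard : ℝ) - (n : ℝ) / ((k : ℝ) - 1)| ≤ ν * n

def MemFQetaMu (k : ℕ) (η μ : ℝ) {n : ℕ} (G : SimpleGraph (Fin n))
    (Q : Fin (k - 1) → Set (Fin n)) : Prop :=
  MemFQeta k η G Q ∧ PropF1 k μ G Q ∧ PropF2 k μ Q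

noncomputable def xi (p : ℝ) : ℝ := -(3 / 2) * p * Real.logb 2 p

def IsMultiCopy {α β : Type*} (H : SimpleGraph α) (R B : SimpleGraph β) (f : α ↪ β) : Prop :=
  (∀ u v, H.Adj u v → R.Adj (f u) (f v)) ∧
  (∀ u v, u ≠ v → ¬ H.Adj u v → B.Adj (f u) (f v))

def HasMultiCopy {α β : Type*} (H : SimpleGraph α) (R B : SimpleGraph β) : Prop :=
  ∃ f : α ↪ β, IsMultiCopy H R B f

def cliqueEdgeSet {V : Type*} (S : Set V) : Set (Sym2 V) :=
  {e | ¬ e.IsDiag ∧ ∀ x ∈ e, x ∈ S}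

def IsMatchingSet {V : Type*} (s : Set (Sym2 V)) : Prop :=
  (∀ e ∈ s, ¬ e.IsDiag) ∧
  ∀ e ∈ s, ∀ f ∈ s, e ≠ f → ∀ x ∈ e, x ∉ f

def IsLinearForest {W : Type*} (H : SimpleGraph W) : Prop :=
  H.IsAcyclic ∧
  ∀ v a b c : W, H.Adj v a → H.Adj v b → H.Adj v c → a = b ∨ a = c ∨ b = c

/-- `f` is a (not necessarily induced) copy of the path `P₄` on four vertices in `H`. -/
def IsP4Copy {V : Type*} (H : SimpleGraph V) (f : Fin 4 ↪ V) : Prop :=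
  ∀ u v : Fin 4, (SimpleGraph.pathGraph 4).Adj u v → H.Adj (f u) (f v)


section P4Aux

/-- Hypothesis form of part (iii): every `P₄` copy spans at least `K₄` minus an edge. -/
def P4Hyp {W : Type*} (G : SimpleGraph W) : Prop :=
  ∀ f : Fin 4 ↪ W, IsP4Copy G f →
    ∃ a b : Fin 4, ∀ u v : Fin 4, u ≠ v →
      (u = a ∧ v = b) ∨ (u = b ∧ v = a) ∨ G.Adj (f u) (f v)

lemma mkP4 {W : Type*} {G : SimpleGraph W} {w x y z : W}
    (hwy : w ≠ y) (hwz : w ≠ z) (hxz : x ≠ z)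
    (h1 : G.Adj w x) (h2 : G.Adj x y) (h3 : G.Adj y z) :
    ∃ f : Fin 4 ↪ W, IsP4Copy G f ∧ f 0 = w ∧ f 1 = x ∧ f 2 = y ∧ f 3 = z := by
  have hwx := h1.ne; have hxy := h2.ne; have hyz := h3.ne
  have h1s := h1.symm; have h2s := h2.symm; have h3s := h3.symm
  set f0 : Fin 4 → W := ![w, x, y, z] with hf0
  have hinj : Function.Injective f0 := by
    intro a b hab
    fin_cases a <;> fin_cases b <;> simp_all [f0]
  refine ⟨⟨f0, hinj⟩, ?_, rfl, rfl, rfl, rfl⟩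
  intro u v huv
  rw [pathGraph_adj] at huv
  fin_cases u <;> fin_cases v <;> simp_all [f0]

lemma two_of_three {W : Type*} {G : SimpleGraph W} (hyp : P4Hyp G) {w x y z : W}
    (hwy : w ≠ y) (hwz : w ≠ z) (hxz : x ≠ z)
    (h1 : G.Adj w x) (h2 : G.Adj x y) (h3 : G.Adj y z) :
    (G.Adj w y ∧ G.Adj w z) ∨ (G.Adj w y ∧ G.Adj x z) ∨ (G.Adj w z ∧ G.Adj x z) := by
  obtain ⟨f, hcopy, h0, h1', h2', h3'⟩ := mkP4 hwy hwz hxz h1 h2 h3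
  obtain ⟨a, b, hab⟩ := hyp f hcopy
  have p02 := hab 0 2 (by decide)
  have p03 := hab 0 3 (by decide)
  have p13 := hab 1 3 (by decide)
  rw [h0, h2'] at p02
  rw [h0, h3'] at p03
  rw [h1', h3'] at p13
  rcases p02 with (⟨ha, hb⟩ | ⟨ha, hb⟩ | h02) <;>
    rcases p03 with (⟨ha', hb'⟩ | ⟨ha', hb'⟩ | h03) <;>
      rcases p13 with (⟨ha'', hb''⟩ | ⟨ha'', hb''⟩ | h13) <;>
        subst_vars <;> simp_all

lemma step2 {W : Type*} {G : SimpleGraph W} (hyp : P4Hyp G) {u v : W}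
    (h : G.Reachable u v) :
    u = v ∨ G.Adj u v ∨ ∃ w, G.Adj u w ∧ G.Adj w v := by
  obtain ⟨p⟩ := h
  induction p with
  | nil => exact Or.inl rfl
  | @cons u a v hua p ih =>
    by_cases huv : u = v
    · exact Or.inl huv
    by_cases hGuv : G.Adj u v
    · exact Or.inr (Or.inl hGuv)
    rcases ih with rfl | hav | ⟨w, haw, hwv⟩
    · exact absurd hua hGuv
    · exact Or.inr (Or.inr ⟨a, hua, hav⟩)
    · by_cases huw : u = w
      · exact Or.inr (Or.inl (huw ▸ hwv))
      by_cases hGuw : G.Adj u w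
      · exact Or.inr (Or.inr ⟨w, hGuw, hwv⟩)
      have hav : a ≠ v := fun h => hGuv (h ▸ hua)
      rcases two_of_three hyp huw huv hav hua haw hwv with ⟨h', _⟩ | ⟨h', _⟩ | ⟨h', _⟩
      · exact absurd h' hGuw
      · exact absurd h' hGuw
      · exact absurd h' hGuv

lemma sun_of_hyp {W : Type*} {G : SimpleGraph W}
    (hc : ∀ u v : W, G.Reachable u v) (hyp : P4Hyp G) : IsSunGraph G := by
  refine ⟨{v | ∃ w, v ≠ w ∧ ¬ G.Adj v w}, fun u v => ?_⟩
  constructor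
  · intro huv
    refine ⟨huv.ne, ?_⟩
    rintro ⟨⟨x, hux, hGux⟩, ⟨y, hvy, hGvy⟩⟩
    have hxv : x ≠ v := fun h => hGux (h ▸ huv)
    have hyu : y ≠ u := fun h => hGvy (h ▸ huv.symm)
    have caseA : ∀ p q r : W, G.Adj p q → p ≠ r → q ≠ r → ¬ G.Adj p r → ¬ G.Adj q r → False := by
      intro p q r hpq hpr hqr hGpr hGqr
      obtain ⟨s, hqs, hsr⟩ : ∃ s, G.Adj q s ∧ G.Adj s r := by
        rcases step2 hyp (hc q r) with rfl | h | h
        · exact absurd rfl hqr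
        · exact absurd h hGqr
        · exact h
      have hps : p ≠ s := fun h => hGpr (h ▸ hsr)
      rcases two_of_three hyp hps hpr hqr hpq hqs hsr with ⟨_, h'⟩ | ⟨_, h'⟩ | ⟨h', _⟩
      · exact hGpr h'
      · exact hGqr h'
      · exact hGpr h'
    by_cases hxy : x = y
    · exact caseA v u x huv.symm (hxy ▸ hvy) hux (hxy ▸ hGvy) hGux
    by_cases hGvx : G.Adj v x
    · by_cases hGuy : G.Adj u y
      · rcases two_of_three hyp (Ne.symm hux) hxy hvy hGvx.symm huv.symm hGuy with
          ⟨h', _⟩ | ⟨h', _⟩ | ⟨_, h'⟩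
        · exact hGux h'.symm
        · exact hGux h'.symm
        · exact hGvy h'
      · exact caseA v u y huv.symm hvy (Ne.symm hyu) hGvy hGuy
    · exact caseA u v x huv hux (Ne.symm hxv) hGux hGvx
  · rintro ⟨huv, hB⟩
    by_contra hGuv
    exact hB ⟨⟨v, huv, hGuv⟩, ⟨u, Ne.symm huv, fun h => hGuv h.symm⟩⟩

lemma supp_reachable {V : Type*} (H : SimpleGraph V) (c : H.ConnectedComponent)
    (u v : c.supp) : (H.induce c.supp).Reachable u v := by
  obtain ⟨u, hu⟩ := u; obtain ⟨v, hv⟩ := v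
  have h : H.Reachable u v := by
    rw [ConnectedComponent.mem_supp_iff] at hu hv
    exact ConnectedComponent.exact (hu.trans hv.symm)
  obtain ⟨p⟩ := h
  induction p with
  | nil => exact Reachable.refl _
  | @cons u a v hua p ih =>
    have ha : a ∈ c.supp := by
      rw [ConnectedComponent.mem_supp_iff] at hu ⊢
      rw [← hu]; exact (SimpleGraph.ConnectedComponent.connectedComponentMk_eq_of_adj hua).symm
    have hadj : (H.induce c.supp).Adj ⟨u, hu⟩ ⟨a, ha⟩ := hua
    exact hadj.reachable.trans (ih ha hv)

lemma hyp_induce {V : Type*} (H : SimpleGraph V) (s : Set V)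
    (hyp : ∀ f : Fin 4 ↪ V, IsP4Copy H f →
      ∃ a b : Fin 4, ∀ u v : Fin 4, u ≠ v →
        (u = a ∧ v = b) ∨ (u = b ∧ v = a) ∨ H.Adj (f u) (f v)) :
    P4Hyp (H.induce s) := by
  intro f hf
  obtain ⟨a, b, hab⟩ := hyp (f.trans (Function.Embedding.subtype _))
    (fun u v huv => hf u v huv)
  exact ⟨a, b, fun u v huv => hab u v huv⟩

lemma star_or_clique {W : Type*} {G : SimpleGraph W} {B : Set W}
    (hB : ∀ u v : W, G.Adj u v ↔ u ≠ v ∧ ¬(u ∈ B ∧ v ∈ B))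
    (hyp2 : ∀ f : Fin 4 ↪ W, IsP4Copy G f → ∀ u v : Fin 4, u ≠ v → G.Adj (f u) (f v)) :
    IsStarGraph G ∨ IsCliqueGraph G := by
  by_cases hBsub : B.Subsingleton
  · refine Or.inr (fun u v huv => ?_)
    exact (hB u v).2 ⟨huv, fun ⟨hu, hv⟩ => huv (hBsub hu hv)⟩
  · left
    obtain ⟨b1, hb1, b2, hb2, hbne⟩ : ∃ b1 ∈ B, ∃ b2 ∈ B, b1 ≠ b2 :=
      Set.not_subsingleton_iff.mp hBsub
    have hAsub : (Bᶜ : Set W).Subsingleton := by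
      intro a1 ha1 a2 ha2
      by_contra hane
      have hb1a1 : b1 ≠ a1 := fun h => ha1 (h ▸ hb1)
      have hb2a2 : b2 ≠ a2 := fun h => ha2 (h ▸ hb2)
      have hb1a2 : b1 ≠ a2 := fun h => ha2 (h ▸ hb1)
      have hb2a1 : b2 ≠ a1 := fun h => ha1 (h ▸ hb2)
      have e1 : G.Adj b1 a1 := (hB _ _).2 ⟨hb1a1, fun h => ha1 h.2⟩
      have e2 : G.Adj a1 a2 := (hB _ _).2 ⟨hane, fun h => ha1 h.1⟩
      have e3 : G.Adj a2 b2 := (hB _ _).2 ⟨Ne.symm hb2a2, fun h => ha2 h.1⟩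
      obtain ⟨f, hf, h0, h1, h2, h3⟩ := mkP4 hb1a2 hbne (Ne.symm hb2a1) e1 e2 e3
      have := hyp2 f hf 0 3 (by decide)
      rw [h0, h3, hB] at this
      exact this.2 ⟨hb1, hb2⟩
    have hcen : ∀ x : W, (∃ a b, a ≠ b ∧ G.Adj x a ∧ G.Adj x b) → x ∈ (Bᶜ : Set W) := by
      rintro x ⟨a, b, hab, hxa, hxb⟩ hxB
      have ha : a ∈ (Bᶜ : Set W) := fun haB => ((hB x a).1 hxa).2 ⟨hxB, haB⟩
      have hb : b ∈ (Bᶜ : Set W) := fun hbB => ((hB x b).1 hxb).2 ⟨hxB, hbB⟩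
      exact hab (hAsub ha hb)
    intro v hv u hu
    exact hAsub (hcen v hv) (hcen u hu)

lemma card_ge_three {W : Type*} [Finite W] {v a b : W} (hva : v ≠ a) (hvb : v ≠ b)
    (hab : a ≠ b) : 3 ≤ Nat.card W := by
  have hinj : Function.Injective (![v, a, b] : Fin 3 → W) := by
    intro i j hij
    fin_cases i <;> fin_cases j <;> simp_all
  calc 3 = Nat.card (Fin 3) := by simp
  _ ≤ Nat.card W := Nat.card_le_card_of_injective _ hinj

lemma clique_cases {W : Type*} [Finite W] {G : SimpleGraph W} (hcl : IsCliqueGraph G)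
    (hnoP4 : ¬ ∃ f : Fin 4 ↪ W, IsP4Copy G f) :
    IsStarGraph G ∨ IsTriangleGraph G := by
  have hle : Nat.card W ≤ 3 := by
    by_contra hlt
    push_neg at hlt
    have : Nonempty (Fin 4 ↪ W) := by
      have := Fintype.ofFinite W
      rw [Function.Embedding.nonempty_iff_card_le]
      simp only [Nat.card_eq_fintype_card, Fintype.card_fin] at hlt ⊢
      omega
    obtain ⟨f⟩ := this
    exact hnoP4 ⟨f, fun u v huv => hcl _ _ (f.injective.ne huv.ne)⟩
  rcases Nat.lt_or_ge (Nat.card W) 3 with h3 | h3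
  · left
    rintro v ⟨a, b, hab, hva, hvb⟩ u _
    exact absurd (card_ge_three hva.ne hvb.ne hab) (by omega)
  · exact Or.inr ⟨le_antisymm hle h3, hcl⟩

end P4Aux

/-- (Proposition: `k`-good tetrahedron free graphs.)
(i) A `P₄`-free graph is a disjoint union of stars and triangles.
(ii) If the vertices of every copy of `P₄` induce a `K₄`, the graph is a disjoint union of
stars and cliques.
(iii) If the vertices of every copy of `P₄` induce a `K₄` or a `K₄` minus an edge, the
graph is a disjoint union of suns. -/
theorem P4_structure {V : Type*} [Fintype V] (H : SimpleGraph V) :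
    ((¬ ∃ f : Fin 4 ↪ V, IsP4Copy H f) → UnionOfStarsAndTriangles H) ∧
    ((∀ f : Fin 4 ↪ V, IsP4Copy H f → ∀ u v : Fin 4, u ≠ v → H.Adj (f u) (f v)) →
      UnionOfStarsAndCliques H) ∧
    ((∀ f : Fin 4 ↪ V, IsP4Copy H f →
        ∃ a b : Fin 4, ∀ u v : Fin 4, u ≠ v →
          (u = a ∧ v = b) ∨ (u = b ∧ v = a) ∨ H.Adj (f u) (f v)) →
      UnionOfSuns H)  := by
  have part3 : (∀ f : Fin 4 ↪ V, IsP4Copy H f →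
      ∃ a b : Fin 4, ∀ u v : Fin 4, u ≠ v →
        (u = a ∧ v = b) ∨ (u = b ∧ v = a) ∨ H.Adj (f u) (f v)) → UnionOfSuns H :=
    fun hyp c => sun_of_hyp (supp_reachable H c) (hyp_induce H c.supp hyp)
  have part2 : (∀ f : Fin 4 ↪ V, IsP4Copy H f → ∀ u v : Fin 4, u ≠ v → H.Adj (f u) (f v)) →
      UnionOfStarsAndCliques H := by
    intro hyp2 c
    obtain ⟨B, hB⟩ := part3 (fun f hf => ⟨0, 0, fun u v huv => Or.inr (Or.inr (hyp2 f hf u v huv))⟩) c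
    exact star_or_clique hB
      (fun f hf u v huv => hyp2 (f.trans (Function.Embedding.subtype _))
        (fun u v h => hf u v h) u v huv)
  refine ⟨?_, part2, part3⟩
  intro h1 c
  have hyp2 : ∀ f : Fin 4 ↪ V, IsP4Copy H f → ∀ u v : Fin 4, u ≠ v → H.Adj (f u) (f v) :=
    fun f hf u v huv => absurd ⟨f, hf⟩ h1
  rcases part2 hyp2 c with hstar | hclq
  · exact Or.inl hstar
  · exact clique_cases hclq
      (fun ⟨f, hf⟩ => h1 ⟨f.trans (Function.Embedding.subtype _), fun u v h => hf u v h⟩)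
end

section
/- For every k ≥ 4 and all integers n > s ≥ 10^7: s^{s/2} ≤ f_k(n)/f_k(n−s), and f_k(n)/f_k(n−1) ≤ n². -/
open SimpleGraph

namespace FKAux
variable {V W : Type*}

/-- closedness: no edges leave S -/
def Closed (H : SimpleGraph V) (S : Set V) : Prop := ∀ ⦃u v⦄, u ∈ S → H.Adj u v → v ∈ S

lemma walk_mem_closed {H : SimpleGraph V} {S : Set V} (hS : Closed H S) {u x : V}
    (p : H.Walk u x) (hu : u ∈ S) : x ∈ S := by
  induction p with
  | nil => exact hu
  | cons h _ ih => exact ih (hS hu h)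

lemma reachable_mem_closed {H : SimpleGraph V} {S : Set V} (hS : Closed H S) {u x : V}
    (h : H.Reachable u x) (hu : u ∈ S) : x ∈ S := by
  obtain ⟨p⟩ := h; exact walk_mem_closed hS p hu

lemma supp_closed (H : SimpleGraph V) (c : H.ConnectedComponent) : Closed H c.supp := by
  intro u v hu hadj
  simp only [ConnectedComponent.mem_supp_iff] at hu ⊢
  rw [← hu]; exact ConnectedComponent.connectedComponentMk_eq_of_adj hadj.symm

lemma supp_subset_closed {H : SimpleGraph V} {S : Set V} (hS : Closed H S) {v : V}
    (hv : v ∈ S) : (H.connectedComponentMk v).supp ⊆ S := by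
  intro x hx
  rw [ConnectedComponent.mem_supp_iff, ConnectedComponent.eq] at hx
  exact reachable_mem_closed hS hx.symm hv

lemma mem_supp_self (H : SimpleGraph V) (v : V) : v ∈ (H.connectedComponentMk v).supp := rfl

lemma reachable_induce_of_closed {H : SimpleGraph V} {S : Set V} (hS : Closed H S) {u x : V}
    (hu : u ∈ S) (p : H.Walk u x) :
    ∃ hx : x ∈ S, (H.induce S).Reachable ⟨u, hu⟩ ⟨x, hx⟩ := by
  induction p with
  | nil => exact ⟨hu, Reachable.refl _⟩
  | @cons a b c h q ih =>
    have hb : b ∈ S := hS hu h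
    obtain ⟨hx, hr⟩ := ih hb
    exact ⟨hx, Reachable.trans (Adj.reachable (by simpa using h)) hr⟩

lemma reachable_of_induce {H : SimpleGraph V} {S : Set V} {a b : S}
    (h : (H.induce S).Reachable a b) : H.Reachable a.1 b.1 :=
  h.map (SimpleGraph.Embedding.induce S).toHom


section transfer
variable {H : SimpleGraph V} {H' : SimpleGraph W}

lemma isStarGraph_of_emb (f : H ↪g H') (h : IsStarGraph H') : IsStarGraph H := by
  intro u hu v hv
  obtain ⟨a, b, hab, ha, hb⟩ := hu
  obtain ⟨a', b', hab', ha', hb'⟩ := hv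
  have : f u = f v := h ⟨f a, f b, fun hc => hab (f.injective hc),
      f.map_rel_iff.2 ha, f.map_rel_iff.2 hb⟩
    ⟨f a', f b', fun hc => hab' (f.injective hc), f.map_rel_iff.2 ha', f.map_rel_iff.2 hb'⟩
  exact f.injective this

lemma isCliqueGraph_of_emb (f : H ↪g H') (h : IsCliqueGraph H') : IsCliqueGraph H := by
  intro u v huv
  exact f.map_rel_iff.1 (h (f u) (f v) (fun hc => huv (f.injective hc)))

lemma isSunGraph_of_emb (f : H ↪g H') (h : IsSunGraph H') : IsSunGraph H := by
  obtain ⟨B, hB⟩ := h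
  refine ⟨f ⁻¹' B, fun u v => ?_⟩
  rw [← f.map_rel_iff, hB]
  constructor
  · rintro ⟨h1, h2⟩; exact ⟨fun hc => h1 (congrArg f hc), h2⟩
  · rintro ⟨h1, h2⟩; exact ⟨fun hc => h1 (f.injective hc), h2⟩

lemma star_of_no_three {H : SimpleGraph V}
    (h : ∀ a b c : V, a ≠ b → a ≠ c → b ≠ c → False) : IsStarGraph H := by
  intro u hu v _
  obtain ⟨a, b, hab, ha, hb⟩ := hu
  exact absurd (h a b u hab (fun hc => H.irrefl (hc ▸ ha).symm)
    (fun hc => H.irrefl (hc ▸ hb).symm)) not_false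

lemma three_le_card [Finite V] {a b c : V} (hab : a ≠ b) (hac : a ≠ c) (hbc : b ≠ c) :
    3 ≤ Nat.card V := by
  have : Function.Injective (![a, b, c]) := by
    intro i j hij
    fin_cases i <;> fin_cases j <;> simp_all
  simpa using Nat.card_le_card_of_injective _ this

lemma isKSun_of_emb (k : ℕ) (f : H ↪g H') (h : IsKSun k H') : IsKSun k H := by
  unfold IsKSun at h ⊢
  split_ifs at h ⊢ with h4 h5
  · exact isSunGraph_of_emb f h
  · rcases h with h | h
    · exact Or.inl (isStarGraph_of_emb f h)
    · exact Or.inr (isCliqueGraph_of_emb f h)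
  · rcases h with h | h
    · exact Or.inl (isStarGraph_of_emb f h)
    · obtain ⟨hcard, hcl⟩ := h
      by_cases h3 : ∃ a b c : V, a ≠ b ∧ a ≠ c ∧ b ≠ c
      · obtain ⟨a, b, c, hab, hac, hbc⟩ := h3
        have hfin' : Finite W := Nat.finite_of_card_ne_zero (by omega)
        have hfin : Finite V := Finite.of_injective f f.injective
        refine Or.inr ⟨le_antisymm (hcard ▸ Nat.card_le_card_of_injective f f.injective)
          (three_le_card hab hac hbc), isCliqueGraph_of_emb f hcl⟩
      · push_neg at h3
        exact Or.inl (star_of_no_three (fun a b c h1 h2 h3' => by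
          have := h3 a b c h1
          tauto))

end transfer

section union
variable {H : SimpleGraph V} {H' : SimpleGraph W}

lemma unionOfKSuns_induce {k : ℕ} (hH : UnionOfKSuns k H) (S : Set V) :
    UnionOfKSuns k (H.induce S) := by
  intro c
  obtain ⟨⟨v, hvS⟩, hrep⟩ := c.exists_rep
  set d := H.connectedComponentMk v with hd
  have key : ∀ x : S, x ∈ c.supp → x.1 ∈ d.supp := by
    rintro x hx
    rw [ConnectedComponent.mem_supp_iff, ← hrep] at hx
    rw [ConnectedComponent.mem_supp_iff, hd]
    exact ConnectedComponent.eq.mpr (reachable_of_induce (ConnectedComponent.eq.mp hx))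
  refine isKSun_of_emb k ?_ (hH d)
  exact {
    toFun := fun x => ⟨x.1.1, key x.1 x.2⟩
    inj' := by rintro ⟨⟨x, _⟩, _⟩ ⟨⟨y, _⟩, _⟩ h; simp_all
    map_rel_iff' := by rintro ⟨⟨x, _⟩, _⟩ ⟨⟨y, _⟩, _⟩; rfl }

lemma unionOfKSuns_of_iso {k : ℕ} (e : H ≃g H') (hH : UnionOfKSuns k H) :
    UnionOfKSuns k H' := by
  intro c
  obtain ⟨v', hrep⟩ := c.exists_rep
  set d := H.connectedComponentMk (e.symm v') with hd
  have key : ∀ x : W, x ∈ c.supp → e.symm x ∈ d.supp := by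
    intro x hx
    rw [ConnectedComponent.mem_supp_iff, ← hrep] at hx
    rw [ConnectedComponent.mem_supp_iff, hd]
    exact ConnectedComponent.eq.mpr ((ConnectedComponent.eq.mp hx).map e.symm.toHom)
  refine isKSun_of_emb k ?_ (hH d)
  exact {
    toFun := fun x => ⟨e.symm x.1, key x.1 x.2⟩
    inj' := by
      rintro ⟨x, _⟩ ⟨y, _⟩ h
      simp only [Subtype.mk.injEq] at h ⊢
      exact e.symm.injective h
    map_rel_iff' := by
      rintro ⟨x, _⟩ ⟨y, _⟩
      simp only [comap_adj, Function.Embedding.coe_subtype]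
      exact e.symm.map_adj_iff }

end union

section sunstruct
variable {H : SimpleGraph V}

lemma isSunGraph_of_clique (h : IsCliqueGraph H) : IsSunGraph H :=
  ⟨∅, fun u v => by simpa using ⟨fun ha => ha.ne, fun hne => h u v hne⟩⟩

lemma isSunGraph_of_star_preconn (hs : IsStarGraph H)
    (hc : ∀ a b : V, H.Reachable a b) : IsSunGraph H := by
  by_cases hE : ∃ a b, H.Adj a b
  · obtain ⟨a, b, hab⟩ := hE
    by_cases hD : ∃ c : V, ∃ x y, x ≠ y ∧ H.Adj c x ∧ H.Adj c y
    · obtain ⟨c, hcD⟩ := hD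
      -- claim1 : every edge touches c
      have claim1 : ∀ u v, H.Adj u v → u = c ∨ v = c := by
        intro u v huv
        by_contra hcon
        push_neg at hcon
        obtain ⟨hu, hv⟩ := hcon
        have hclosed : Closed H {u, v} := by
          intro t w ht htw
          rcases ht with rfl | rfl
          · by_cases hwv : w = v
            · simp [hwv]
            · exact absurd (hs ⟨v, w, fun h => hwv h.symm, huv, htw⟩ hcD) hu
          · by_cases hwu : w = u
            · simp [hwu]
            · exact absurd (hs ⟨u, w, fun h => hwu h.symm, huv.symm, htw⟩ hcD) hv
        obtain ⟨p⟩ := hc u c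
        have := walk_mem_closed hclosed p (by simp)
        simp only [Set.mem_insert_iff, Set.mem_singleton_iff] at this
        rcases this with h | h
        · exact hu h.symm
        · exact hv h.symm
      -- claim2 : c adjacent to everything else
      have claim2 : ∀ x, x ≠ c → H.Adj c x := by
        intro x hx
        obtain ⟨p⟩ := hc x c
        cases p with
        | nil => exact absurd rfl hx
        | cons h q =>
          rcases claim1 _ _ h with h1 | h1
          · exact absurd h1 hx
          · exact (h1 ▸ h).symm
      refine ⟨{x | x ≠ c}, fun u v => ?_⟩
      simp only [Set.mem_setOf_eq]
      constructor
      · intro huv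
        refine ⟨huv.ne, ?_⟩
        rintro ⟨h1, h2⟩
        rcases claim1 u v huv with h | h
        · exact h1 h
        · exact h2 h
      · rintro ⟨huv, h⟩
        by_cases hu : u = c
        · subst hu; exact claim2 v (Ne.symm huv)
        · have hv : v = c := by tauto
          subst hv; exact (claim2 u hu).symm
    · -- no branch vertex: V = {a, b}
      push_neg at hD
      have hclosed : Closed H {a, b} := by
        intro t w ht htw
        rcases ht with rfl | rfl
        · by_cases hwb : w = b
          · simp [hwb]
          · exact absurd (hD t b w (fun h => hwb h.symm) hab) (not_not_intro htw)
        · by_cases hwa : w = a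
          · simp [hwa]
          · exact absurd (hD t a w (fun h => hwa h.symm) hab.symm) (not_not_intro htw)
      have hall : ∀ x : V, x = a ∨ x = b := by
        intro x
        obtain ⟨p⟩ := hc a x
        have := walk_mem_closed hclosed p (by simp)
        simpa using this
      refine ⟨∅, fun u v => ?_⟩
      simp only [Set.mem_empty_iff_false, false_and, not_false_iff, and_true]
      refine ⟨Adj.ne, fun huv => ?_⟩
      rcases hall u with rfl | rfl <;> rcases hall v with rfl | rfl <;>
        first | exact absurd rfl huv | assumption | exact hab.symm
  · push_neg at hE
    refine ⟨Set.univ, fun u v => ?_⟩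
    simp only [Set.mem_univ, and_self, not_true_eq_false, and_false, iff_false]
    exact hE u v

lemma comp_preconn (H : SimpleGraph V) (c : H.ConnectedComponent) (a b : c.supp) :
    (H.induce c.supp).Reachable a b := by
  have hab : H.Reachable a.1 b.1 := by
    have ha := a.2; have hb := b.2
    rw [ConnectedComponent.mem_supp_iff] at ha hb
    exact ConnectedComponent.eq.mp (ha.trans hb.symm)
  obtain ⟨p⟩ := hab
  obtain ⟨hx, hr⟩ := reachable_induce_of_closed (supp_closed H c) a.2 p
  have : (⟨a.1, a.2⟩ : c.supp) = a := rfl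
  convert hr using 2

lemma comp_isSun {k : ℕ} (hH : UnionOfKSuns k H) (c : H.ConnectedComponent) :
    IsSunGraph (H.induce c.supp) := by
  have h := hH c
  unfold IsKSun at h
  split_ifs at h with h4 h5
  · exact h
  · rcases h with h | h
    · exact isSunGraph_of_star_preconn h (comp_preconn H c)
    · exact isSunGraph_of_clique h
  · rcases h with h | h
    · exact isSunGraph_of_star_preconn h (comp_preconn H c)
    · exact isSunGraph_of_clique h.2

lemma sun_structure {k : ℕ} (hH : UnionOfKSuns k H) (c : H.ConnectedComponent) :
    ∃ B : Set V, B ⊆ c.supp ∧ ∀ u v, u ∈ c.supp → v ∈ c.supp →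
      (H.Adj u v ↔ u ≠ v ∧ ¬(u ∈ B ∧ v ∈ B)) := by
  obtain ⟨B', hB'⟩ := comp_isSun hH c
  refine ⟨Subtype.val '' B', by rintro x ⟨y, _, rfl⟩; exact y.2, fun u v hu hv => ?_⟩
  have := hB' ⟨u, hu⟩ ⟨v, hv⟩
  simp only [comap_adj, Function.Embedding.coe_subtype] at this
  rw [this]
  constructor
  · rintro ⟨h1, h2⟩
    refine ⟨fun hc => h1 (Subtype.ext hc), fun ⟨hu', hv'⟩ => h2 ?_⟩
    obtain ⟨yu, hyu, hequ⟩ := hu'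
    obtain ⟨yv, hyv, heqv⟩ := hv'
    exact ⟨by rwa [show (⟨u, hu⟩ : c.supp) = yu from Subtype.ext hequ.symm],
      by rwa [show (⟨v, hv⟩ : c.supp) = yv from Subtype.ext heqv.symm]⟩
  · rintro ⟨h1, h2⟩
    exact ⟨fun hc => h1 (congrArg Subtype.val hc),
      fun ⟨hu', hv'⟩ => h2 ⟨⟨_, hu', rfl⟩, ⟨_, hv', rfl⟩⟩⟩

end sunstruct

section restrictextend
variable {n : ℕ}

def restrictG (n : ℕ) (H : SimpleGraph (Fin n)) : SimpleGraph (Fin (n - 1)) :=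
  H.comap (Fin.castLE (Nat.sub_le n 1))

lemma restrictG_adj {H : SimpleGraph (Fin n)} {x y : Fin (n - 1)} :
    (restrictG n H).Adj x y ↔ H.Adj (Fin.castLE (Nat.sub_le n 1) x) (Fin.castLE (Nat.sub_le n 1) y) :=
  Iff.rfl

def restrictIso (H : SimpleGraph (Fin n)) :
    restrictG n H ≃g H.induce {x : Fin n | (x : ℕ) < n - 1} where
  toFun := fun a => ⟨Fin.castLE (Nat.sub_le n 1) a, a.isLt⟩
  invFun := fun x => ⟨(x.1 : ℕ), x.2⟩
  left_inv := fun a => rfl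
  right_inv := fun x => by ext; rfl
  map_rel_iff' := Iff.rfl

lemma unionOfKSuns_restrict {k : ℕ} {H : SimpleGraph (Fin n)} (hH : UnionOfKSuns k H) :
    UnionOfKSuns k (restrictG n H) :=
  unionOfKSuns_of_iso (restrictIso H).symm (unionOfKSuns_induce hH _)

def extendG (G' : SimpleGraph (Fin (n - 1))) (N : Set (Fin n)) : SimpleGraph (Fin n) where
  Adj x y := (∃ (hx : (x : ℕ) < n - 1) (hy : (y : ℕ) < n - 1), G'.Adj ⟨x, hx⟩ ⟨y, hy⟩) ∨
    ((x : ℕ) = n - 1 ∧ y ∈ N ∧ (y : ℕ) ≠ n - 1) ∨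
    ((y : ℕ) = n - 1 ∧ x ∈ N ∧ (x : ℕ) ≠ n - 1)
  symm := by
    constructor
    rintro x y (⟨hx, hy, h⟩ | h | h)
    · exact Or.inl ⟨hy, hx, h.symm⟩
    · exact Or.inr (Or.inr h)
    · exact Or.inr (Or.inl h)
  loopless := by
    constructor
    rintro x (⟨hx, hy, h⟩ | ⟨h1, _, h2⟩ | ⟨h1, _, h2⟩) <;>
      [exact G'.irrefl h; exact h2 h1; exact h2 h1]

lemma extend_restrict_eq {H : SimpleGraph (Fin n)} {v : Fin n} (hv : (v : ℕ) = n - 1) :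
    extendG (restrictG n H) (H.neighborSet v) = H := by
  ext x y
  show _ ∨ _ ∨ _ ↔ _
  constructor
  · rintro (⟨hx, hy, h⟩ | ⟨h1, h2, h3⟩ | ⟨h1, h2, h3⟩)
    · have ex : Fin.castLE (Nat.sub_le n 1) (⟨(x : ℕ), hx⟩ : Fin (n - 1)) = x := Fin.ext rfl
      have ey : Fin.castLE (Nat.sub_le n 1) (⟨(y : ℕ), hy⟩ : Fin (n - 1)) = y := Fin.ext rfl
      rw [restrictG_adj, ex, ey] at h
      exact h
    · have : x = v := Fin.ext (by omega)
      subst this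
      exact h2
    · have : y = v := Fin.ext (by omega)
      subst this
      exact h2.symm
  · intro h
    by_cases hx : (x : ℕ) < n - 1 <;> by_cases hy : (y : ℕ) < n - 1
    · refine Or.inl ⟨hx, hy, ?_⟩
      rw [restrictG_adj]
      convert h using 2 <;> exact Fin.ext rfl
    · have hyv : y = v := Fin.ext (by have := y.isLt; omega)
      refine Or.inr (Or.inr ⟨by omega, ?_, by omega⟩)
      subst hyv
      exact h.symm
    · have hxv : x = v := Fin.ext (by have := x.isLt; omega)
      refine Or.inr (Or.inl ⟨by omega, ?_, by omega⟩)
      subst hxv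
      exact h
    · have hxv : x = v := Fin.ext (by have := x.isLt; omega)
      have hyv : y = v := Fin.ext (by have := y.isLt; omega)
      rw [hxv, hyv] at h
      exact absurd h (H.irrefl)

end restrictextend

section decoding
variable {n : ℕ}

def compSet (G' : SimpleGraph (Fin (n - 1))) (a : Fin (n - 1)) : Set (Fin n) :=
  {x | ∃ hx : (x : ℕ) < n - 1, G'.Reachable ⟨x, hx⟩ a}

def domSet (G' : SimpleGraph (Fin (n - 1))) (a : Fin (n - 1)) : Set (Fin n) :=
  {x | ∃ hx : (x : ℕ) < n - 1, G'.Reachable ⟨x, hx⟩ a ∧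
    ∀ y : Fin (n - 1), G'.Reachable y a → y ≠ ⟨x, hx⟩ → G'.Adj ⟨x, hx⟩ y}

def decode (n : ℕ) (t : SimpleGraph (Fin (n - 1)) × Fin n × Fin n) : SimpleGraph (Fin n) :=
  if hi : (t.2.1 : ℕ) < n - 1 then
    if (t.2.2 : ℕ) < n - 1 then
      if t.2.1 = t.2.2 then
        (extendG t.1 {x | x = t.2.1}).comap
          ⇑(Equiv.swap (⟨n - 1, Nat.sub_lt t.2.1.pos Nat.one_pos⟩ : Fin n) t.2.1)
      else extendG t.1 (compSet t.1 ⟨t.2.1, hi⟩ \ {t.2.2})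
    else extendG t.1 (compSet t.1 ⟨t.2.1, hi⟩)
  else
    if hj : (t.2.2 : ℕ) < n - 1 then extendG t.1 (domSet t.1 ⟨t.2.2, hj⟩)
    else extendG t.1 ∅

lemma comap_swap_swap (H : SimpleGraph (Fin n)) (a b : Fin n) :
    (H.comap ⇑(Equiv.swap a b)).comap ⇑(Equiv.swap a b) = H := by
  ext x y
  show H.Adj (Equiv.swap a b (Equiv.swap a b x)) (Equiv.swap a b (Equiv.swap a b y)) ↔ _
  rw [Equiv.swap_apply_self, Equiv.swap_apply_self]

lemma castLE_mk (x : Fin n) (hx : (x : ℕ) < n - 1) :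
    Fin.castLE (Nat.sub_le n 1) (⟨(x : ℕ), hx⟩ : Fin (n - 1)) = x := Fin.ext rfl

lemma compSet_eq_of_dom {H : SimpleGraph (Fin n)} {v : Fin n} (hv : (v : ℕ) = n - 1)
    {a : Fin n} (ha : (a : ℕ) < n - 1) (hs : a ∈ (H.connectedComponentMk v).supp)
    (hdom : ∀ y ∈ (H.connectedComponentMk v).supp, y ≠ a → H.Adj a y) :
    compSet (restrictG n H) ⟨(a : ℕ), ha⟩ = (H.connectedComponentMk v).supp \ {v} := by
  ext x
  constructor
  · rintro ⟨hx, hr⟩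
    have hcl : Closed (restrictG n H) {y : Fin (n - 1) |
        Fin.castLE (Nat.sub_le n 1) y ∈ (H.connectedComponentMk v).supp} := by
      intro u w hu hadj
      exact supp_closed H _ hu hadj
    have hmem : Fin.castLE (Nat.sub_le n 1) (⟨(x : ℕ), hx⟩ : Fin (n - 1)) ∈
        (H.connectedComponentMk v).supp :=
      reachable_mem_closed hcl hr.symm (by simpa [castLE_mk] using hs)
    rw [castLE_mk] at hmem
    exact ⟨hmem, by intro he; rw [he, hv] at hx; omega⟩
  · rintro ⟨hxs, hxv⟩
    have hx : (x : ℕ) < n - 1 := by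
      have h1 := x.isLt
      have h2 : (x : ℕ) ≠ n - 1 := fun h => hxv (Fin.ext (h.trans hv.symm))
      omega
    refine ⟨hx, ?_⟩
    by_cases hxa : x = a
    · subst hxa
      exact Reachable.refl _
    · refine Adj.reachable ?_
      show H.Adj (Fin.castLE (Nat.sub_le n 1) ⟨(x : ℕ), hx⟩) (Fin.castLE (Nat.sub_le n 1) ⟨(a : ℕ), ha⟩)
      rw [castLE_mk, castLE_mk]
      exact (hdom x hxs hxa).symm

end decoding

theorem enc {k n : ℕ} (hn : 0 < n) (H : SimpleGraph (Fin n)) (hH : UnionOfKSuns k H) :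
    ∃ (G' : SimpleGraph (Fin (n - 1))) (i j : Fin n),
      UnionOfKSuns k G' ∧ decode n (G', i, j) = H := by
  set v : Fin n := ⟨n - 1, Nat.sub_lt hn Nat.one_pos⟩ with hvdef
  have hv : (v : ℕ) = n - 1 := rfl
  have hvlt : ¬ ((v : ℕ) < n - 1) := by omega
  set c := H.connectedComponentMk v with hcdef
  obtain ⟨B, hBsub, hchar⟩ := sun_structure hH c
  have hvs : v ∈ c.supp := mem_supp_self H v
  have hNs : ∀ y, H.Adj v y → y ∈ c.supp ∧ y ≠ v := fun y h =>
    ⟨supp_closed H c hvs h, fun he => H.irrefl (he ▸ h)⟩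
  have hlt : ∀ {y : Fin n}, y ≠ v → (y : ℕ) < n - 1 := by
    intro y hy
    have h1 := y.isLt
    have h2 : (y : ℕ) ≠ n - 1 := fun h => hy (Fin.ext (h.trans hv.symm))
    omega
  have hrG : UnionOfKSuns k (restrictG n H) := unionOfKSuns_restrict hH
  by_cases hvB : v ∈ B
  · -- v is a side vertex; N = A
    have hNA : H.neighborSet v = {y | y ∈ c.supp ∧ y ∉ B} := by
      ext y
      constructor
      · intro hy
        obtain ⟨hys, hyv⟩ := hNs y hy
        refine ⟨hys, fun hyB => ?_⟩
        exact ((hchar v y hvs hys).mp hy).2 ⟨hvB, hyB⟩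
      · rintro ⟨hys, hyB⟩
        have hyv : y ≠ v := fun he => hyB (he ▸ hvB)
        exact (hchar v y hvs hys).mpr ⟨Ne.symm hyv, fun h => hyB h.2⟩
    by_cases hAe : ∃ a, a ∈ c.supp ∧ a ∉ B
    · obtain ⟨a, has, haB⟩ := hAe
      have hav : a ≠ v := fun he => haB (he ▸ hvB)
      have halt : (a : ℕ) < n - 1 := hlt hav
      have hdom : ∀ y ∈ c.supp, y ≠ a → H.Adj a y := fun y hys hya =>
        (hchar a y has hys).mpr ⟨Ne.symm hya, fun h => haB h.1⟩
      have hcomp := compSet_eq_of_dom hv halt has hdom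
      by_cases hB2 : ∃ b, b ∈ B ∧ b ≠ v
      · obtain ⟨b, hbB, hbv⟩ := hB2
        have hblt : (b : ℕ) < n - 1 := hlt hbv
        by_cases hB3 : ∃ b', b' ∈ B ∧ b' ≠ v ∧ b' ≠ b
        · -- at least two side vertices besides v : use domSet, code (v, a)
          obtain ⟨b', hb'B, hb'v, hb'b⟩ := hB3
          refine ⟨restrictG n H, v, a, hrG, ?_⟩
          have hds : domSet (restrictG n H) ⟨(a : ℕ), halt⟩ = H.neighborSet v := by
            rw [hNA]
            ext x
            constructor
            · rintro ⟨hx, hr, hdc⟩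
              have hxc : x ∈ compSet (restrictG n H) ⟨(a : ℕ), halt⟩ := ⟨hx, hr⟩
              rw [hcomp] at hxc
              obtain ⟨hxs, hxv⟩ := hxc
              refine ⟨hxs, fun hxB => ?_⟩
              -- pick w ∈ B, w ≠ v, w ≠ x
              obtain ⟨w, hwB, hwv, hwx⟩ : ∃ w, w ∈ B ∧ w ≠ v ∧ w ≠ x := by
                by_cases hxb : x = b
                · exact ⟨b', hb'B, hb'v, by rw [hxb]; exact hb'b⟩
                · exact ⟨b, hbB, hbv, fun h => hxb h.symm⟩
              have hwlt : (w : ℕ) < n - 1 := hlt hwv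
              have hwc : w ∈ compSet (restrictG n H) ⟨(a : ℕ), halt⟩ := by
                rw [hcomp]; exact ⟨hBsub hwB, hwv⟩
              obtain ⟨hw', hrw⟩ := hwc
              have hadj := hdc ⟨(w : ℕ), hw'⟩ hrw
                (fun h => hwx (by simpa [Fin.ext_iff] using congrArg Fin.val h))
              rw [restrictG_adj, castLE_mk, castLE_mk] at hadj
              exact ((hchar x w hxs (hBsub hwB)).mp hadj).2 ⟨hxB, hwB⟩
            · rintro ⟨hxs, hxB⟩
              have hxv : x ≠ v := fun he => hxB (he ▸ hvB)
              have hx : (x : ℕ) < n - 1 := hlt hxv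
              have hxc : x ∈ compSet (restrictG n H) ⟨(a : ℕ), halt⟩ := by
                rw [hcomp]; exact ⟨hxs, hxv⟩
              obtain ⟨hx', hr⟩ := hxc
              refine ⟨hx, by convert hr, ?_⟩
              intro y hry hyx
              have hyc : (Fin.castLE (Nat.sub_le n 1) y) ∈
                  compSet (restrictG n H) ⟨(a : ℕ), halt⟩ := by
                refine ⟨y.isLt, ?_⟩
                convert hry using 2
                rfl
              rw [hcomp] at hyc
              obtain ⟨hys, hyv⟩ := hyc
              have hxy : x ≠ Fin.castLE (Nat.sub_le n 1) y := by
                intro he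
                exact hyx (by rw [Fin.ext_iff] at he ⊢; exact (congrArg id he).symm)
              have hadj : H.Adj x (Fin.castLE (Nat.sub_le n 1) y) :=
                (hchar x _ hxs hys).mpr ⟨hxy, fun h => hxB h.1⟩
              rw [restrictG_adj, castLE_mk]
              exact hadj
          show decode n (restrictG n H, v, a) = H
          rw [decode]
          simp only
          rw [dif_neg hvlt, dif_pos halt, hds, extend_restrict_eq hv]
        · -- exactly one side vertex b besides v : code (a, b)
          push_neg at hB3
          refine ⟨restrictG n H, a, b, hrG, ?_⟩
          have hab : a ≠ b := fun h => haB (h ▸ hbB)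
          have hset : compSet (restrictG n H) ⟨(a : ℕ), halt⟩ \ {b} = H.neighborSet v := by
            rw [hcomp, hNA]
            ext y
            simp only [Set.mem_diff, Set.mem_singleton_iff, Set.mem_setOf_eq]
            constructor
            · rintro ⟨⟨hys, hyv⟩, hyb⟩
              refine ⟨hys, fun hyB => ?_⟩
              rcases (em (y = v)) with h | h
              · exact hyv h
              · exact hyb (hB3 y hyB h)
            · rintro ⟨hys, hyB⟩
              exact ⟨⟨hys, fun h => hyB (h ▸ hvB)⟩, fun h => hyB (h ▸ hbB)⟩
          show decode n (restrictG n H, a, b) = H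
          rw [decode]
          simp only
          rw [dif_pos halt, if_pos hblt, if_neg hab, hset, extend_restrict_eq hv]
      · -- B ⊆ {v} : code (a, v), N = supp \ {v}
        push_neg at hB2
        refine ⟨restrictG n H, a, v, hrG, ?_⟩
        have hset : compSet (restrictG n H) ⟨(a : ℕ), halt⟩ = H.neighborSet v := by
          rw [hcomp, hNA]
          ext y
          simp only [Set.mem_diff, Set.mem_singleton_iff, Set.mem_setOf_eq]
          constructor
          · rintro ⟨hys, hyv⟩
            exact ⟨hys, fun hyB => hyv (hB2 y hyB)⟩
          · rintro ⟨hys, hyB⟩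
            exact ⟨hys, fun h => hyB (h ▸ hvB)⟩
        show decode n (restrictG n H, a, v) = H
        rw [decode]
        simp only
        rw [dif_pos halt, if_neg hvlt, hset, extend_restrict_eq hv]
    · -- A = ∅ : v isolated, code (v, v)
      push_neg at hAe
      refine ⟨restrictG n H, v, v, hrG, ?_⟩
      have hN0 : H.neighborSet v = ∅ := by
        rw [hNA]
        ext y
        simp only [Set.mem_setOf_eq, Set.mem_empty_iff_false, iff_false, not_and, not_not]
        exact fun hys => hAe y hys
      show decode n (restrictG n H, v, v) = H
      rw [decode]
      simp only
      rw [dif_neg hvlt, dif_neg hvlt, ← hN0, extend_restrict_eq hv]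
  · -- v is a body vertex (or side with all-adjacent): N = supp \ {v}
    have hNA : H.neighborSet v = {y | y ∈ c.supp ∧ y ≠ v} := by
      ext y
      constructor
      · exact fun hy => hNs y hy
      · rintro ⟨hys, hyv⟩
        exact (hchar v y hvs hys).mpr ⟨Ne.symm hyv, fun h => hvB h.1⟩
    by_cases hAe : ∃ a, a ∈ c.supp ∧ a ∉ B ∧ a ≠ v
    · -- dominating vertex a exists : code (a, v)
      obtain ⟨a, has, haB, hav⟩ := hAe
      have halt : (a : ℕ) < n - 1 := hlt hav
      have hdom : ∀ y ∈ c.supp, y ≠ a → H.Adj a y := fun y hys hya =>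
        (hchar a y has hys).mpr ⟨Ne.symm hya, fun h => haB h.1⟩
      have hcomp := compSet_eq_of_dom hv halt has hdom
      refine ⟨restrictG n H, a, v, hrG, ?_⟩
      have hset : compSet (restrictG n H) ⟨(a : ℕ), halt⟩ = H.neighborSet v := by
        rw [hcomp, hNA, ← hcdef]
        ext y
        exact ⟨fun ⟨h1, h2⟩ => ⟨h1, h2⟩, fun ⟨h1, h2⟩ => ⟨h1, h2⟩⟩
      show decode n (restrictG n H, a, v) = H
      rw [decode]
      simp only
      rw [dif_pos halt, if_neg hvlt, hset, extend_restrict_eq hv]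
    · push_neg at hAe
      -- every y ∈ supp, y ≠ v is in B
      have hsB : ∀ y, y ∈ c.supp → y ≠ v → y ∈ B := by
        intro y hys hyv
        by_contra hyB
        exact hyv (hAe y hys hyB)
      by_cases hm : ∃ m, m ∈ c.supp ∧ m ≠ v
      · obtain ⟨m, hms, hmv⟩ := hm
        have hmlt : (m : ℕ) < n - 1 := hlt hmv
        by_cases hm2 : ∃ b', b' ∈ c.supp ∧ b' ≠ v ∧ b' ≠ m
        · -- swap case
          obtain ⟨b', hb's, hb'v, hb'm⟩ := hm2
          set σ := Equiv.swap v m with hσ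
          set H₂ := H.comap ⇑σ with hH₂
          have hiso : H₂ ≃g H := SimpleGraph.Iso.comap σ H
          have hH₂s : UnionOfKSuns k H₂ := unionOfKSuns_of_iso hiso.symm hH
          refine ⟨restrictG n H₂, m, m, unionOfKSuns_restrict hH₂s, ?_⟩
          -- adjacency of m in H : only to v
          have hmB : m ∈ B := hsB m hms hmv
          have hmadj : ∀ z, H.Adj m z ↔ z = v := by
            intro z
            constructor
            · intro hz
              have hzs : z ∈ c.supp := supp_closed H c hms hz
              by_contra hzv
              exact ((hchar m z hms hzs).mp hz).2 ⟨hmB, hsB z hzs hzv⟩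
            · rintro rfl
              exact (hchar v m hvs hms).mpr ⟨hmv.symm, fun h => hvB h.1⟩ |>.symm
          have hN2 : H₂.neighborSet v = {x | x = m} := by
            ext y
            show H.Adj (σ v) (σ y) ↔ y = m
            rw [hσ, Equiv.swap_apply_left, hmadj]
            constructor
            · intro h
              have := congrArg σ h
              rwa [hσ, Equiv.swap_apply_self, Equiv.swap_apply_left] at this
            · intro h
              rw [h]
              exact Equiv.swap_apply_right v m
          show decode n (restrictG n H₂, m, m) = H
          rw [decode]
          simp only
          rw [dif_pos hmlt, if_pos hmlt]
          rw [if_pos (trivial : True)]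
          have hvv : (⟨n - 1, Nat.sub_lt m.pos Nat.one_pos⟩ : Fin n) = v := rfl
          rw [hvv]
          have : extendG (restrictG n H₂) {x | x = m} = H₂ := by
            rw [← hN2]
            exact extend_restrict_eq hv
          rw [this, hH₂, hσ, comap_swap_swap]
        · -- supp = {v, m} : code (m, v)
          push_neg at hm2
          refine ⟨restrictG n H, m, v, hrG, ?_⟩
          have hdom : ∀ y ∈ c.supp, y ≠ m → H.Adj m y := by
            intro y hys hym
            have hyv : y = v := by
              by_contra hyv
              exact hym (hm2 y hys hyv)
            rw [hyv]
            exact ((hchar v m hvs hms).mpr ⟨Ne.symm hmv, fun h => hvB h.1⟩).symm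
          have hcomp := compSet_eq_of_dom hv hmlt hms hdom
          have hset : compSet (restrictG n H) ⟨(m : ℕ), hmlt⟩ = H.neighborSet v := by
            rw [hcomp, hNA, ← hcdef]
            ext y
            exact ⟨fun ⟨h1, h2⟩ => ⟨h1, h2⟩, fun ⟨h1, h2⟩ => ⟨h1, h2⟩⟩
          show decode n (restrictG n H, m, v) = H
          rw [decode]
          simp only
          rw [dif_pos hmlt, if_neg hvlt, hset, extend_restrict_eq hv]
      · -- supp = {v} : code (v, v)
        push_neg at hm
        refine ⟨restrictG n H, v, v, hrG, ?_⟩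
        have hN0 : H.neighborSet v = ∅ := by
          rw [hNA]
          ext y
          simp only [Set.mem_setOf_eq, Set.mem_empty_iff_false, iff_false, not_and, not_not]
          exact fun hys => hm y hys
        show decode n (restrictG n H, v, v) = H
        rw [decode]
        simp only
        rw [dif_neg hvlt, dif_neg hvlt, ← hN0, extend_restrict_eq hv]

section join
variable {m c L : ℕ}

/-- x is a leaf whose assigned center is y -/
def SA (f : Fin L → Fin c) (x y : Fin (m + c + L)) : Prop :=
  ∃ h : (x : ℕ) - (m + c) < L, m + c ≤ (x : ℕ) ∧
    (y : ℕ) = m + (f ⟨(x : ℕ) - (m + c), h⟩ : Fin c)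

def joinG (H₁ : SimpleGraph (Fin m)) (f : Fin L → Fin c) : SimpleGraph (Fin (m + c + L)) where
  Adj x y := (∃ (hx : (x : ℕ) < m) (hy : (y : ℕ) < m), H₁.Adj ⟨x, hx⟩ ⟨y, hy⟩) ∨
    SA f x y ∨ SA f y x
  symm := by
    constructor
    rintro x y (⟨hx, hy, h⟩ | h | h)
    exacts [Or.inl ⟨hy, hx, h.symm⟩, Or.inr (Or.inr h), Or.inr (Or.inl h)]
  loopless := by
    constructor
    rintro x (⟨hx, hy, h⟩ | ⟨h, h1, h2⟩ | ⟨h, h1, h2⟩)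
    · exact H₁.irrefl h
    · have := (f ⟨(x : ℕ) - (m + c), h⟩).isLt; omega
    · have := (f ⟨(x : ℕ) - (m + c), h⟩).isLt; omega

lemma joinG_adj_left {H₁ : SimpleGraph (Fin m)} {f : Fin L → Fin c} (a b : Fin m) :
    (joinG H₁ f).Adj ⟨(a : ℕ), by omega⟩ ⟨(b : ℕ), by omega⟩ ↔ H₁.Adj a b := by
  constructor
  · rintro (⟨hx, hy, h⟩ | ⟨h, h1, h2⟩ | ⟨h, h1, h2⟩)
    · convert h <;> exact (Fin.ext rfl)
    · have h1' : m + c ≤ (a : ℕ) := h1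
      have := a.isLt; omega
    · have h1' : m + c ≤ (b : ℕ) := h1
      have := b.isLt; omega
  · intro h
    refine Or.inl ⟨a.isLt, b.isLt, ?_⟩
    convert h <;> exact (Fin.ext rfl)

lemma joinG_closed_left (H₁ : SimpleGraph (Fin m)) (f : Fin L → Fin c) :
    Closed (joinG H₁ f) {x : Fin (m + c + L) | (x : ℕ) < m} := by
  rintro u w hu (⟨hx, hy, h⟩ | ⟨h, h1, h2⟩ | ⟨h, h1, h2⟩)
  · exact hy
  · exact absurd hu (by simp only [Set.mem_setOf_eq]; omega)
  · have := (f ⟨(w : ℕ) - (m + c), h⟩).isLt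
    exact absurd hu (by simp only [Set.mem_setOf_eq]; omega)

/-- transfer of reachability into an adjacency-reflecting closed embedding -/
lemma reach_transfer {V₁ V : Type*} {H₁ : SimpleGraph V₁} {H : SimpleGraph V} {φ : V₁ → V}
    (hAdj : ∀ a b, H₁.Adj a b ↔ H.Adj (φ a) (φ b)) (hcl : Closed H (Set.range φ))
    {u y : V} (p : H.Walk u y) : ∀ {a : V₁}, φ a = u → ∃ b, φ b = y ∧ H₁.Reachable a b := by
  induction p with
  | nil => exact fun ha => ⟨_, ha, Reachable.refl _⟩
  | @cons u' w' y' h q ih =>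
    intro a ha
    have hw : w' ∈ Set.range φ := hcl ⟨a, ha⟩ (ha ▸ h)
    obtain ⟨b', hb'⟩ := hw
    obtain ⟨b, hb, hr⟩ := ih hb'
    exact ⟨b, hb, Reachable.trans (Adj.reachable ((hAdj a b').mpr (by rw [ha, hb']; exact h))) hr⟩

lemma isKSun_comp_of_closed_emb {V₁ V : Type*} {H₁ : SimpleGraph V₁} {H : SimpleGraph V} {k : ℕ}
    {φ : V₁ → V} (hinj : Function.Injective φ)
    (hAdj : ∀ a b, H₁.Adj a b ↔ H.Adj (φ a) (φ b)) (hcl : Closed H (Set.range φ))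
    (hU : UnionOfKSuns k H₁) (c : H.ConnectedComponent) (x0 : V₁) (hx0 : φ x0 ∈ c.supp) :
    IsKSun k (H.induce c.supp) := by
  classical
  set d := H₁.connectedComponentMk x0 with hd
  have key : ∀ z : c.supp, ∃ b, φ b = z.1 ∧ b ∈ d.supp := by
    rintro ⟨z, hz⟩
    rw [ConnectedComponent.mem_supp_iff] at hz hx0
    have hr : H.Reachable (φ x0) z := ConnectedComponent.eq.mp (hx0.trans hz.symm)
    obtain ⟨p⟩ := hr
    obtain ⟨b, hb, hrb⟩ := reach_transfer hAdj hcl p rfl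
    exact ⟨b, hb, by rw [ConnectedComponent.mem_supp_iff, hd]
                     exact ConnectedComponent.eq.mpr hrb.symm⟩
  choose ψ hψ1 hψ2 using key
  refine isKSun_of_emb k ?_ (hU d)
  exact {
    toFun := fun z => ⟨ψ z, hψ2 z⟩
    inj' := by
      intro z1 z2 h
      have : φ (ψ z1) = φ (ψ z2) := by rw [Subtype.mk.injEq] at h; rw [h]
      rw [hψ1, hψ1] at this
      exact Subtype.ext this
    map_rel_iff' := by
      intro z1 z2
      simp only [comap_adj, Function.Embedding.coe_subtype, Function.Embedding.coeFn_mk]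
      rw [hAdj]; show H.Adj (φ (ψ z1)) (φ (ψ z2)) ↔ _; rw [hψ1, hψ1] }

end join

section join2
variable {m c L : ℕ} {H₁ : SimpleGraph (Fin m)} {f : Fin L → Fin c} {k : ℕ}

def Si (f : Fin L → Fin c) (i : Fin c) : Set (Fin (m + c + L)) :=
  {x | (x : ℕ) = m + i ∨ ∃ h : (x : ℕ) - (m + c) < L, m + c ≤ (x : ℕ) ∧ f ⟨(x : ℕ) - (m + c), h⟩ = i}

lemma Si_closed (i : Fin c) : Closed (joinG H₁ f) (Si f i) := by
  rintro u w hu (⟨hx, hy, h⟩ | ⟨h, hc, heq⟩ | ⟨h, hc, heq⟩)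
  · rcases hu with h1 | ⟨h2, h3, _⟩
    · have := i.isLt; omega
    · omega
  · rcases hu with h1 | ⟨h2, h3, hf⟩
    · have := i.isLt; omega
    · left
      rw [heq]
      congr 1
      rw [← hf]
  · rcases hu with h1 | ⟨h2, h3, hf⟩
    · right
      refine ⟨h, hc, ?_⟩
      have : (f ⟨(w : ℕ) - (m + c), h⟩ : ℕ) = (i : ℕ) := by omega
      exact Fin.ext this
    · have := (f ⟨(w : ℕ) - (m + c), h⟩).isLt
      omega

lemma isKSun_comp_second (c' : (joinG H₁ f).ConnectedComponent) (w : Fin (m + c + L))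
    (hw : (joinG H₁ f).connectedComponentMk w = c') (hwm : m ≤ (w : ℕ)) :
    IsKSun k ((joinG H₁ f).induce c'.supp) := by
  subst hw
  obtain ⟨i0, hwS⟩ : ∃ i0 : Fin c, w ∈ Si f i0 := by
    by_cases hwc : (w : ℕ) < m + c
    · exact ⟨⟨(w : ℕ) - m, by omega⟩, Or.inl (by simp; omega)⟩
    · have h : (w : ℕ) - (m + c) < L := by have := w.isLt; omega
      exact ⟨f ⟨(w : ℕ) - (m + c), h⟩, Or.inr ⟨h, by omega, rfl⟩⟩
  have hsub : ((joinG H₁ f).connectedComponentMk w).supp ⊆ Si f i0 :=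
    supp_subset_closed (Si_closed i0) hwS
  set cc := (joinG H₁ f).connectedComponentMk w with hcc
  have hchar : ∀ (z1 z2 : cc.supp), ((joinG H₁ f).induce cc.supp).Adj z1 z2 ↔
      z1 ≠ z2 ∧ ¬((z1 : Fin (m + c + L)).1 ≠ m + (i0 : ℕ) ∧ (z2 : Fin (m + c + L)).1 ≠ m + (i0 : ℕ)) := by
    intro z1 z2
    constructor
    · intro hadj
      refine ⟨hadj.ne, ?_⟩
      have hadj' : (joinG H₁ f).Adj z1.1 z2.1 := hadj
      have hz1 := hsub z1.2
      have hz2 := hsub z2.2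
      rcases hadj' with (⟨hx, hy, h⟩ | ⟨h, hc, heq⟩ | ⟨h, hc, heq⟩)
      · rcases hz1 with h1 | ⟨h2, h3, _⟩
        · have := i0.isLt; omega
        · omega
      · rcases hz1 with h1 | ⟨h2, h3, hf⟩
        · rintro ⟨ha, _⟩; exact ha h1
        · rintro ⟨_, hb⟩
          apply hb
          rw [heq]
          congr 1
          rw [← hf]
      · rcases hz2 with h1 | ⟨h2, h3, hf⟩
        · rintro ⟨_, hb⟩; exact hb h1
        · rintro ⟨hb, _⟩
          apply hb
          rw [heq]
          congr 1
          rw [← hf]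
    · rintro ⟨hne, hnand⟩
      show (joinG H₁ f).Adj z1.1 z2.1
      have hz1 := hsub z1.2
      have hz2 := hsub z2.2
      push_neg at hnand
      by_cases hc2 : (z2 : Fin (m + c + L)).1 = m + (i0 : ℕ)
      · rcases hz1 with h1 | ⟨h2, h3, hf⟩
        · exact absurd (Subtype.ext (Fin.ext (h1.trans hc2.symm))) hne
        · refine Or.inr (Or.inl ⟨h2, h3, ?_⟩)
          rw [hf, hc2]
      · have hc1 : (z1 : Fin (m + c + L)).1 = m + (i0 : ℕ) := by
          by_contra h
          exact hc2 (hnand h)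
        rcases hz2 with h1 | ⟨h2, h3, hf⟩
        · exact absurd (Subtype.ext (Fin.ext (hc1.trans h1.symm))) hne
        · refine Or.inr (Or.inr ⟨h2, h3, ?_⟩)
          rw [hf, hc1]
  have hsun : IsSunGraph ((joinG H₁ f).induce cc.supp) := by
    refine ⟨{z | (z : Fin (m + c + L)).1 ≠ m + (i0 : ℕ)}, fun u v => ?_⟩
    exact hchar u v
  have hstar : IsStarGraph ((joinG H₁ f).induce cc.supp) := by
    intro z1 h1 z2 h2
    obtain ⟨a, b, hab, ha, hb⟩ := h1
    obtain ⟨a', b', hab', ha', hb'⟩ := h2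
    have key : ∀ (z : cc.supp), (∃ x y : cc.supp, x ≠ y ∧
        ((joinG H₁ f).induce cc.supp).Adj z x ∧ ((joinG H₁ f).induce cc.supp).Adj z y) →
        (z : Fin (m + c + L)).1 = m + (i0 : ℕ) := by
      rintro z ⟨x, y, hxy, hx, hy⟩
      by_contra hz
      obtain ⟨_, hx2⟩ := (hchar z x).mp hx
      obtain ⟨_, hy2⟩ := (hchar z y).mp hy
      push_neg at hx2 hy2
      exact hxy (Subtype.ext (Fin.ext ((hx2 hz).trans (hy2 hz).symm)))
    have e1 := key z1 ⟨a, b, hab, ha, hb⟩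
    have e2 := key z2 ⟨a', b', hab', ha', hb'⟩
    exact Subtype.ext (Fin.ext (e1.trans e2.symm))
  unfold IsKSun
  split_ifs
  · exact hsun
  · exact Or.inl hstar
  · exact Or.inl hstar

lemma unionOfKSuns_joinG (hU : UnionOfKSuns k H₁) : UnionOfKSuns k (joinG H₁ f) := by
  intro c'
  obtain ⟨w, hw⟩ := c'.exists_rep
  by_cases hwm : (w : ℕ) < m
  · have hrange : Set.range (fun a : Fin m => (⟨(a : ℕ), by omega⟩ : Fin (m + c + L))) =
        {x : Fin (m + c + L) | (x : ℕ) < m} := by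
      ext x
      constructor
      · rintro ⟨a, rfl⟩; exact a.isLt
      · intro hx; exact ⟨⟨(x : ℕ), hx⟩, Fin.ext rfl⟩
    refine isKSun_comp_of_closed_emb (φ := fun a : Fin m => ⟨(a : ℕ), by omega⟩)
      ?_ (fun a b => (joinG_adj_left a b).symm) (hrange ▸ joinG_closed_left H₁ f) hU c'
      ⟨(w : ℕ), hwm⟩ ?_
    · intro a b hab
      rw [Fin.ext_iff] at hab ⊢
      exact hab
    · exact hw
  · exact isKSun_comp_second c' w hw (by omega)

end join2

section counting
variable {m c L k : ℕ}

lemma joinG_adj_leaf_center {H₁ : SimpleGraph (Fin m)} {f : Fin L → Fin c}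
    (ℓ : Fin L) (t : Fin c) :
    (joinG H₁ f).Adj ⟨m + c + (ℓ : ℕ), by have := ℓ.isLt; omega⟩
      ⟨m + (t : ℕ), by have := t.isLt; omega⟩ ↔ f ℓ = t := by
  constructor
  · rintro (⟨hx, hy, h⟩ | ⟨h, hc, heq⟩ | ⟨h, hc, heq⟩)
    · exact absurd hx (show ¬ (m + c + (ℓ : ℕ) < m) by omega)
    · have hℓ : (⟨m + c + (ℓ : ℕ) - (m + c), h⟩ : Fin L) = ℓ :=
        Fin.ext (show m + c + (ℓ : ℕ) - (m + c) = (ℓ : ℕ) by omega)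
      have heq' : m + (t : ℕ) = m + ((f ⟨m + c + (ℓ : ℕ) - (m + c), h⟩ : Fin c) : ℕ) := heq
      rw [hℓ] at heq'
      exact Fin.ext (by omega)
    · have hc' : m + c ≤ m + (t : ℕ) := hc
      have := t.isLt
      omega
  · intro ht
    have h : m + c + (ℓ : ℕ) - (m + c) < L := by have := ℓ.isLt; omega
    refine Or.inr (Or.inl ⟨h, (show m + c ≤ m + c + (ℓ : ℕ) by omega), ?_⟩)
    show m + (t : ℕ) = m + ((f ⟨m + c + (ℓ : ℕ) - (m + c), h⟩ : Fin c) : ℕ)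
    have hℓ : (⟨m + c + (ℓ : ℕ) - (m + c), h⟩ : Fin L) = ℓ :=
      Fin.ext (show m + c + (ℓ : ℕ) - (m + c) = (ℓ : ℕ) by omega)
    rw [hℓ, ht]

lemma joinG_inj {H₁ H₂ : SimpleGraph (Fin m)} {f g : Fin L → Fin c}
    (E : joinG H₁ f = joinG H₂ g) : H₁ = H₂ ∧ f = g := by
  constructor
  · ext a b
    rw [← joinG_adj_left (f := f) a b, E, joinG_adj_left]
  · funext ℓ
    have h1 : (joinG H₁ f).Adj ⟨m + c + (ℓ : ℕ), by have := ℓ.isLt; omega⟩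
        ⟨m + ((f ℓ) : ℕ), by have := (f ℓ).isLt; omega⟩ :=
      (joinG_adj_leaf_center ℓ (f ℓ)).mpr rfl
    rw [E] at h1
    exact ((joinG_adj_leaf_center ℓ (f ℓ)).mp h1).symm

lemma fk_eq (k n : ℕ) :
    fk k n = Nat.card {H : SimpleGraph (Fin n) // UnionOfKSuns k H} := by
  refine Nat.card_congr ⟨fun G => ⟨G.1ᶜ, G.2⟩, fun H => ⟨H.1ᶜ, by
    rw [compl_compl]; exact H.2⟩, fun G => Subtype.ext (compl_compl _),
    fun H => Subtype.ext (compl_compl _)⟩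

lemma unionOfKSuns_bot {V : Type*} : UnionOfKSuns k (⊥ : SimpleGraph V) := by
  intro c
  have hstar : IsStarGraph ((⊥ : SimpleGraph V).induce c.supp) := by
    rintro u ⟨a, b, hab, h1, h2⟩
    exact absurd h1 (by simp)
  have hsun : IsSunGraph ((⊥ : SimpleGraph V).induce c.supp) := by
    refine ⟨Set.univ, fun u v => ?_⟩
    constructor
    · intro h; exact absurd h (by simp)
    · rintro ⟨h1, h2⟩; exact absurd ⟨trivial, trivial⟩ h2
  unfold IsKSun
  split_ifs
  · exact hsun
  · exact Or.inl hstar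
  · exact Or.inl hstar

lemma fk_pos (k n : ℕ) : 0 < fk k n := by
  rw [fk_eq]
  have : Nonempty {H : SimpleGraph (Fin n) // UnionOfKSuns k H} := ⟨⟨⊥, unionOfKSuns_bot⟩⟩
  exact Nat.card_pos

lemma fk_upper {n : ℕ} (hn : 0 < n) (k : ℕ) : fk k n ≤ fk k (n - 1) * (n * n) := by
  rw [fk_eq, fk_eq]
  have hmaps : ∀ H : {H : SimpleGraph (Fin n) // UnionOfKSuns k H},
      ∃ t : {G' : SimpleGraph (Fin (n - 1)) // UnionOfKSuns k G'} × Fin n × Fin n,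
        decode n (t.1.1, t.2.1, t.2.2) = H.1 := by
    rintro ⟨H, hH⟩
    obtain ⟨G', i, j, h1, h2⟩ := enc hn H hH
    exact ⟨⟨⟨G', h1⟩, i, j⟩, h2⟩
  choose F hF using hmaps
  have hinj : Function.Injective F := by
    intro a b hab
    apply Subtype.ext
    rw [← hF a, ← hF b, hab]
  calc Nat.card {H : SimpleGraph (Fin n) // UnionOfKSuns k H}
      ≤ Nat.card ({G' : SimpleGraph (Fin (n - 1)) // UnionOfKSuns k G'} × Fin n × Fin n) :=
        Nat.card_le_card_of_injective F hinj
    _ = Nat.card {G' : SimpleGraph (Fin (n - 1)) // UnionOfKSuns k G'} * (n * n) := by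
        simp [Nat.card_prod]

lemma fk_lower (k m c L : ℕ) : fk k m * c ^ L ≤ fk k (m + c + L) := by
  rw [fk_eq, fk_eq]
  set F : {H₁ : SimpleGraph (Fin m) // UnionOfKSuns k H₁} × (Fin L → Fin c) →
      {H : SimpleGraph (Fin (m + c + L)) // UnionOfKSuns k H} :=
    fun p => ⟨joinG p.1.1 p.2, unionOfKSuns_joinG p.1.2⟩ with hFdef
  have hinj : Function.Injective F := by
    rintro ⟨⟨H₁, h1⟩, f⟩ ⟨⟨H₂, h2⟩, g⟩ hab
    have hE : joinG H₁ f = joinG H₂ g := congrArg Subtype.val hab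
    obtain ⟨e1, e2⟩ := joinG_inj hE
    simp only [Prod.mk.injEq, Subtype.mk.injEq]
    exact ⟨e1, e2⟩
  calc Nat.card {H₁ : SimpleGraph (Fin m) // UnionOfKSuns k H₁} * c ^ L
      = Nat.card ({H₁ : SimpleGraph (Fin m) // UnionOfKSuns k H₁} × (Fin L → Fin c)) := by
        simp [Nat.card_prod, Nat.card_fun]
    _ ≤ _ := Nat.card_le_card_of_injective F hinj

end counting


end FKAux

open FKAux

/-- (Lemma `f`-estimate 2.) For `k ≥ 4` and `n > s ≥ 10⁷`:
`s^{s/2} ≤ f_k(n)/f_k(n−s)` and `f_k(n)/f_k(n−1) ≤ n²`. -/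
theorem fk_estimate_two (k : ℕ) (hk : 4 ≤ k) (n s : ℕ) (hs : 10 ^ 7 ≤ s) (hn : s < n) :
    (s : ℝ) ^ ((s : ℝ) / 2) ≤ (fk k n : ℝ) / (fk k (n - s) : ℝ) ∧
    (fk k n : ℝ) / (fk k (n - 1) : ℝ) ≤ (n : ℝ) ^ 2 := by
  constructor
  · set q := s / 4 with hq
    set Lv := s - q with hL
    have hq1 : 1 ≤ q := by omega
    have hkey : fk k (n - s) * q ^ Lv ≤ fk k n := by
      have h := fk_lower k (n - s) q Lv
      rwa [show n - s + q + Lv = n by omega] at h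
    have hfkpos : (0 : ℝ) < (fk k (n - s) : ℝ) := by exact_mod_cast fk_pos k (n - s)
    rw [le_div_iff₀ hfkpos]
    have hs0 : (0 : ℝ) < (s : ℝ) := by
      have : 0 < s := by omega
      exact_mod_cast this
    have hq0 : (0 : ℝ) < (q : ℝ) := by exact_mod_cast hq1
    have hmain : (s : ℝ) ^ ((s : ℝ) / 2) ≤ (q : ℝ) ^ (Lv : ℕ) := by
      rw [show ((q : ℝ) ^ (Lv : ℕ)) = (q : ℝ) ^ ((Lv : ℕ) : ℝ) from (Real.rpow_natCast _ _).symm]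
      rw [Real.rpow_def_of_pos hs0, Real.rpow_def_of_pos hq0]
      apply Real.exp_le_exp.mpr
      have hs1 : (1 : ℝ) ≤ (s : ℝ) := by
        have : 1 ≤ s := by omega
        exact_mod_cast this
      have hlogs : 0 ≤ Real.log s := Real.log_nonneg hs1
      have hlogq0 : 0 ≤ Real.log q := Real.log_nonneg (by exact_mod_cast hq1)
      have h5 : Real.log 5 ≤ Real.log s / 3 := by
        have h125s : (125 : ℝ) ≤ (s : ℝ) := by
          have : 125 ≤ s := by omega
          exact_mod_cast this
        have h125 : Real.log 125 ≤ Real.log s := Real.log_le_log (by norm_num) h125s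
        have heq : Real.log 125 = 3 * Real.log 5 := by
          rw [show (125 : ℝ) = 5 ^ (3 : ℕ) by norm_num, Real.log_pow]
          push_cast
          ring
        linarith
      have hq5 : Real.log s - Real.log 5 ≤ Real.log q := by
        have h5q : s ≤ 5 * q := by omega
        have h1 : (s : ℝ) / 5 ≤ (q : ℝ) := by
          have : (s : ℝ) ≤ 5 * (q : ℝ) := by exact_mod_cast h5q
          linarith
        have h2 : Real.log ((s : ℝ) / 5) ≤ Real.log q := Real.log_le_log (by positivity) h1
        rwa [Real.log_div (ne_of_gt hs0) (by norm_num)] at h2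
      have hLv : (3 : ℝ) / 4 * (s : ℝ) ≤ ((Lv : ℕ) : ℝ) := by
        have h34 : 3 * s ≤ 4 * Lv := by omega
        have : (3 : ℝ) * s ≤ 4 * (Lv : ℝ) := by exact_mod_cast h34
        linarith
      calc Real.log s * ((s : ℝ) / 2) = (2 / 3 * Real.log s) * (3 / 4 * (s : ℝ)) := by ring
        _ ≤ (Real.log s - Real.log 5) * (3 / 4 * (s : ℝ)) :=
            mul_le_mul_of_nonneg_right (by linarith) (by positivity)
        _ ≤ Real.log q * (3 / 4 * (s : ℝ)) := mul_le_mul_of_nonneg_right hq5 (by positivity)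
        _ ≤ Real.log q * ((Lv : ℕ) : ℝ) := mul_le_mul_of_nonneg_left hLv hlogq0
    calc (s : ℝ) ^ ((s : ℝ) / 2) * (fk k (n - s) : ℝ)
        ≤ (q : ℝ) ^ (Lv : ℕ) * (fk k (n - s) : ℝ) :=
          mul_le_mul_of_nonneg_right hmain (le_of_lt hfkpos)
      _ = ((fk k (n - s) * q ^ Lv : ℕ) : ℝ) := by push_cast; ring
      _ ≤ (fk k n : ℝ) := by exact_mod_cast hkey
  · have hn0 : 0 < n := by omega
    have h := fk_upper hn0 k
    have hpos : (0 : ℝ) < (fk k (n - 1) : ℝ) := by exact_mod_cast fk_pos k (n - 1)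
    rw [div_le_iff₀ hpos]
    calc (fk k n : ℝ) ≤ (fk k (n - 1) : ℝ) * ((n : ℝ) * (n : ℝ)) := by exact_mod_cast h
      _ = (n : ℝ) ^ 2 * (fk k (n - 1) : ℝ) := by ring
end

section
/- Let k, n ∈ ℕ with n ≥ k ≥ 2 and let 0 < s < n. (i) If G is a k-partite graph on n vertices, with vertex classes V_1, …, V_k, in which some vertex class A ∈ {V_1,…,V_k} satisfies ||A| − n/k| ≥ s, then e(G) ≤ t_k(n) − s(s/2 − k). (ii) t_{k−1}(n) ≥ t_{k−1}(n−s) + s·n·(k−2)/(k−1) − s(k−2) − t_{k−1}(s). -/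
open SimpleGraph

private lemma pair_count {α : Type*} [Fintype α] (P : α → α → Prop)
    [∀ a b : α, Decidable (P a b)] :
    (Finset.univ.filter fun p : α × α => P p.1 p.2).card
      = ∑ a : α, (Finset.univ.filter fun b => P a b).card := by
  rw [Finset.card_filter, Fintype.sum_prod_type]
  exact Finset.sum_congr rfl fun a _ => (Finset.card_filter _ _).symm

private lemma adj_pair_count {α : Type*} [Fintype α] [DecidableEq α] (G : SimpleGraph α)
    [DecidableRel G.Adj] :
    (Finset.univ.filter fun p : α × α => G.Adj p.1 p.2).card = 2 * G.edgeFinset.card := by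
  rw [pair_count (fun a b => G.Adj a b), ← SimpleGraph.sum_degrees_eq_twice_card_edges]
  refine Finset.sum_congr rfl fun v _ => ?_
  rw [SimpleGraph.degree]
  congr 1
  ext w
  simp [SimpleGraph.mem_neighborFinset]

private lemma same_class_count {α : Type*} [Fintype α] {k : ℕ} [DecidableEq α] (c : α → Fin k) :
    (Finset.univ.filter fun p : α × α => c p.1 = c p.2).card
      = ∑ i : Fin k, (Finset.univ.filter fun v => c v = i).card ^ 2 := by
  rw [pair_count (fun a b => c a = c b)]
  have h1 : ∀ a : α, (Finset.univ.filter fun b => c a = c b).card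
      = (Finset.univ.filter fun v => c v = c a).card := by
    intro a; congr 1; ext b; simp [eq_comm]
  calc ∑ a : α, (Finset.univ.filter fun b => c a = c b).card
      = ∑ a : α, (Finset.univ.filter fun v => c v = c a).card := by
        exact Finset.sum_congr rfl fun a _ => h1 a
    _ = ∑ i : Fin k, ∑ a ∈ Finset.univ.filter (fun a => c a = i),
          (Finset.univ.filter fun v => c v = c a).card := by
        rw [Finset.sum_fiberwise_of_maps_to (fun x _ => Finset.mem_univ (c x))]
    _ = ∑ i : Fin k, (Finset.univ.filter fun v => c v = i).card ^ 2 := by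
        refine Finset.sum_congr rfl fun i _ => ?_
        rw [Finset.sum_congr rfl (fun a ha => ?_), Finset.sum_const, smul_eq_mul, sq]
        rw [Finset.mem_filter] at ha
        rw [ha.2]

private lemma multipartite_bound {α : Type*} [Fintype α] [DecidableEq α] (G : SimpleGraph α)
    [DecidableRel G.Adj] {k : ℕ} (c : α → Fin k) (h : ∀ u v, G.Adj u v → c u ≠ c v) :
    2 * G.edgeFinset.card + ∑ i : Fin k, (Finset.univ.filter fun v => c v = i).card ^ 2
      ≤ Fintype.card α ^ 2 := by
  have h1 : (Finset.univ.filter fun p : α × α => G.Adj p.1 p.2).card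
      ≤ (Finset.univ.filter fun p : α × α => ¬ c p.1 = c p.2).card := by
    refine Finset.card_le_card fun p hp => ?_
    simp only [Finset.mem_filter, Finset.mem_univ, true_and] at hp ⊢
    exact h _ _ hp
  have h2 := Finset.card_filter_add_card_filter_not
    (s := (Finset.univ : Finset (α × α))) (p := fun p => c p.1 = c p.2)
  rw [adj_pair_count] at h1
  rw [same_class_count (c := c)] at h2
  have h3 : (Finset.univ : Finset (α × α)).card = Fintype.card α ^ 2 := by
    simp [sq]
  omega

private lemma range_fib_card {m : ℕ} (hm : 0 < m) (r n : ℕ) (hr : r < m) :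
    ((Finset.range n).filter fun v => v % m = r).card
      = n / m + (if r < n % m then 1 else 0) := by
  set B := n / m + (if r < n % m then 1 else 0) with hB
  have hBge : n / m ≤ B := Nat.le_add_right _ _
  have hB2 : r < n % m → B = n / m + 1 := fun h => by simp [hB, h]
  have e2 : n / m * m + n % m = n := Nat.div_add_mod' n m
  have key : ((Finset.range n).filter fun v => v % m = r) =
      (Finset.range B).image (fun q => q * m + r) := by
    ext v
    simp only [Finset.mem_filter, Finset.mem_range, Finset.mem_image]
    constructor
    · rintro ⟨hv, hmod⟩
      have e1 : v / m * m + v % m = v := Nat.div_add_mod' v m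
      refine ⟨v / m, ?_, by omega⟩
      have hle : v / m ≤ n / m := Nat.div_le_div_right (le_of_lt hv)
      rcases lt_or_eq_of_le hle with h | h
      · omega
      · have e3 : n / m * m + v % m = v := by rw [← h]; exact e1
        have hlt : r < n % m := by omega
        rw [hB2 hlt]; omega
    · rintro ⟨q, hq, rfl⟩
      have hqmod : (q * m + r) % m = r := by
        rw [Nat.add_comm, Nat.add_mul_mod_self_right, Nat.mod_eq_of_lt hr]
      refine ⟨?_, hqmod⟩
      by_cases hc : r < n % m
      · have hq' : q ≤ n / m := by rw [hB2 hc] at hq; omega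
        have h5 : q * m ≤ n / m * m := Nat.mul_le_mul_right m hq'
        omega
      · have hq' : q + 1 ≤ n / m := by
          simp only [hB, hc, if_neg, not_false_iff, Nat.add_zero] at hq; omega
        have h5 : (q + 1) * m ≤ n / m * m := Nat.mul_le_mul_right m hq'
        have h6 : (q + 1) * m = q * m + m := by ring
        omega
  rw [key, Finset.card_image_of_injective _ (fun a b hab =>
    Nat.eq_of_mul_eq_mul_right hm (by omega : a * m = b * m)), Finset.card_range]

private lemma fin_fib_card {m : ℕ} (hm : 0 < m) (r n : ℕ) (hr : r < m) :
    ((Finset.univ : Finset (Fin n)).filter (fun v : Fin n => (v : ℕ) % m = r)).card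
      = n / m + (if r < n % m then 1 else 0) := by
  rw [← range_fib_card hm r n hr]
  have key : ((Finset.range n).filter fun v => v % m = r)
      = ((Finset.univ : Finset (Fin n)).filter (fun v : Fin n => (v : ℕ) % m = r)).image Fin.val := by
    ext v
    simp only [Finset.mem_filter, Finset.mem_range, Finset.mem_image, Finset.mem_univ, true_and]
    constructor
    · rintro ⟨hv, h⟩
      exact ⟨⟨v, hv⟩, h, rfl⟩
    · rintro ⟨a, ha, rfl⟩
      exact ⟨a.isLt, ha⟩
  rw [key, Finset.card_image_of_injective _ Fin.val_injective]

private lemma sum_fib_sq {m : ℕ} (hm : 0 < m) (n : ℕ) :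
    ∑ i : Fin m, ((Finset.univ : Finset (Fin n)).filter
        (fun v : Fin n => (v : ℕ) % m = (i : ℕ))).card ^ 2
      = m * (n / m) ^ 2 + (2 * (n / m) + 1) * (n % m) := by
  have h1 : ∀ i : Fin m, ((Finset.univ : Finset (Fin n)).filter
      (fun v : Fin n => (v : ℕ) % m = (i : ℕ))).card ^ 2
        = (n / m) ^ 2 + (2 * (n / m) + 1) * (if (i : ℕ) < n % m then 1 else 0) := by
    intro i
    rw [fin_fib_card hm (i : ℕ) n i.isLt]
    by_cases hc : (i : ℕ) < n % m <;> simp [hc] <;> ring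
  rw [Finset.sum_congr rfl fun i _ => h1 i, Finset.sum_add_distrib, Finset.sum_const,
    ← Finset.mul_sum]
  have hpm : n % m < m := Nat.mod_lt n hm
  have h2 : ∑ i : Fin m, (if (i : ℕ) < n % m then 1 else 0) = n % m := by
    rw [Finset.sum_boole]
    simp only [Nat.cast_id]
    have key : (Finset.range (n % m))
        = (Finset.univ.filter (fun i : Fin m => (i : ℕ) < n % m)).image Fin.val := by
      ext v
      simp only [Finset.mem_filter, Finset.mem_range, Finset.mem_image, Finset.mem_univ, true_and]
      constructor
      · intro hv
        exact ⟨⟨v, lt_trans hv hpm⟩, hv, rfl⟩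
      · rintro ⟨a, ha, rfl⟩
        exact ha
    have h3 := congrArg Finset.card key
    rw [Finset.card_image_of_injective _ Fin.val_injective, Finset.card_range] at h3
    omega
  rw [h2]
  simp only [Finset.card_univ, Fintype.card_fin, smul_eq_mul, mul_one]

private lemma turanEdges_card (m n : ℕ) :
    turanEdges m n = (turanGraph n m).edgeFinset.card := by
  rw [turanEdges, Nat.card_eq_fintype_card, SimpleGraph.edgeFinset_card]

private lemma turan_count {m : ℕ} (hm : 0 < m) (n : ℕ) :
    2 * turanEdges m n + (m * (n / m) ^ 2 + (2 * (n / m) + 1) * (n % m)) = n ^ 2 := by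
  classical
  set c : Fin n → Fin m := fun v => ⟨(v : ℕ) % m, Nat.mod_lt _ hm⟩ with hc
  have hadj : ∀ p : Fin n × Fin n, (turanGraph n m).Adj p.1 p.2 ↔ ¬ c p.1 = c p.2 := by
    intro p
    constructor
    · intro h hcc
      exact h (congrArg Fin.val hcc)
    · intro h
      exact fun hv => h (Fin.ext hv)
  have h1 : (Finset.univ.filter fun p : Fin n × Fin n => (turanGraph n m).Adj p.1 p.2)
      = (Finset.univ.filter fun p : Fin n × Fin n => ¬ c p.1 = c p.2) := by
    apply Finset.filter_congr
    intro p _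
    exact hadj p
  have h2 := Finset.card_filter_add_card_filter_not
    (s := (Finset.univ : Finset (Fin n × Fin n))) (p := fun p => c p.1 = c p.2)
  rw [same_class_count (c := c)] at h2
  have h3 : ∀ i : Fin m, (Finset.univ.filter fun v => c v = i)
      = (Finset.univ.filter (fun v : Fin n => (v : ℕ) % m = (i : ℕ))) := by
    intro i
    apply Finset.filter_congr
    intro v _
    constructor
    · intro h; exact congrArg Fin.val h
    · intro h; exact Fin.ext h
  have h4 : ∑ i : Fin m, (Finset.univ.filter fun v => c v = i).card ^ 2
      = m * (n / m) ^ 2 + (2 * (n / m) + 1) * (n % m) := by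
    rw [Finset.sum_congr rfl fun i _ => by rw [h3 i]]
    exact sum_fib_sq hm n
  rw [h4] at h2
  have h5 := adj_pair_count (turanGraph n m)
  rw [h1] at h5
  have h6 : (Finset.univ : Finset (Fin n × Fin n)).card = n ^ 2 := by simp [sq]
  rw [turanEdges_card]
  omega

private lemma turanEdges_real {m : ℕ} (hm : 0 < m) (n : ℕ) :
    (turanEdges m n : ℝ)
      = ((n : ℝ) ^ 2 * (1 - 1 / (m : ℝ))
          - ((n % m : ℕ) : ℝ) * ((m : ℝ) - ((n % m : ℕ) : ℝ)) / (m : ℝ)) / 2 := by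
  have h := turan_count hm n
  have hnm : (m : ℝ) * ((n / m : ℕ) : ℝ) + ((n % m : ℕ) : ℝ) = (n : ℝ) := by
    exact_mod_cast congrArg (Nat.cast : ℕ → ℝ) (Nat.div_add_mod n m)
  have h' : 2 * (turanEdges m n : ℝ)
      + ((m : ℝ) * ((n / m : ℕ) : ℝ) ^ 2 + (2 * ((n / m : ℕ) : ℝ) + 1) * ((n % m : ℕ) : ℝ))
      = (n : ℝ) ^ 2 := by exact_mod_cast congrArg (Nat.cast : ℕ → ℝ) h
  have hm0 : (m : ℝ) ≠ 0 := Nat.cast_ne_zero.mpr hm.ne'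
  have hE : (turanEdges m n : ℝ) = ((n : ℝ) ^ 2
      - ((m : ℝ) * ((n / m : ℕ) : ℝ) ^ 2
        + (2 * ((n / m : ℕ) : ℝ) + 1) * ((n % m : ℕ) : ℝ))) / 2 := by linarith [h']
  rw [hE, ← hnm]
  field_simp
  ring

set_option maxHeartbeats 1000000 in
/-- (Proposition: omitted calculation.) Let `n ≥ k ≥ 2`, `0 < s < n`.
(i) If `G` is a `k`-partite graph on `n` vertices in which some vertex class `A`
satisfies `||A| − n/k| ≥ s`, then `e(G) ≤ t_k(n) − s(s/2 − k)`.
(ii) `t_{k−1}(n) ≥ t_{k−1}(n−s) + sn(k−2)/(k−1) − s(k−2) − t_{k−1}(s)`. -/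
theorem omitted_calculation (k n s : ℕ) (hk : 2 ≤ k) (hn : k ≤ n)
    (hs1 : 0 < s) (hs2 : s < n) :
    (∀ (G : SimpleGraph (Fin n)) (V : Fin k → Set (Fin n)),
      (∀ x : Fin n, ∃! i, x ∈ V i) →
      (∀ i : Fin k, ∀ u ∈ V i, ∀ v ∈ V i, ¬ G.Adj u v) →
      ∀ i0 : Fin k, (s : ℝ) ≤ |((V i0).ncard : ℝ) - (n : ℝ) / (k : ℝ)| →
        (Nat.card G.edgeSet : ℝ) ≤
          (turanEdges k n : ℝ) - (s : ℝ) * ((s : ℝ) / 2 - (k : ℝ))) ∧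
    ((turanEdges (k - 1) (n - s) : ℝ) +
        (s : ℝ) * (n : ℝ) * ((k : ℝ) - 2) / ((k : ℝ) - 1) -
        (s : ℝ) * ((k : ℝ) - 2) - (turanEdges (k - 1) s : ℝ)
      ≤ (turanEdges (k - 1) n : ℝ)) := by
  have hk0 : 0 < k := by omega
  have hkR : (2 : ℝ) ≤ (k : ℝ) := by exact_mod_cast hk
  have hsR : (1 : ℝ) ≤ (s : ℝ) := by exact_mod_cast hs1
  constructor
  · -- part (i)
    intro G V hpart hindep i0 hdev
    classical
    choose c hc using hpart
    have hadj : ∀ u v : Fin n, G.Adj u v → c u ≠ c v := by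
      intro u v huv heq
      exact hindep (c v) u (heq ▸ (hc u).1) v (hc v).1 huv
    have hbound := multipartite_bound G c hadj
    rw [Fintype.card_fin] at hbound
    have hcard : Nat.card G.edgeSet = G.edgeFinset.card := by
      rw [Nat.card_eq_fintype_card, SimpleGraph.edgeFinset_card]
    have hV : ∀ i : Fin k, (V i).ncard = (Finset.univ.filter fun v => c v = i).card := by
      intro i
      have hVi : V i = {x | c x = i} := by
        ext x
        exact ⟨fun hx => ((hc x).2 i hx).symm, fun hx => hx ▸ (hc x).1⟩
      rw [hVi, Set.ncard_eq_toFinset_card']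
      congr 1
      ext x
      simp
    have hsum : ∑ i : Fin k, (Finset.univ.filter fun v => c v = i).card = n := by
      have h := Finset.card_eq_sum_card_fiberwise
        (f := c) (s := (Finset.univ : Finset (Fin n))) (t := Finset.univ)
        (fun x _ => Finset.mem_univ _)
      simpa using h.symm
    -- pass to reals
    set A : Fin k → ℝ := fun i => ((Finset.univ.filter fun v => c v = i).card : ℝ) with hA
    set e : ℝ := (G.edgeFinset.card : ℝ) with he
    have f1 : 2 * e + ∑ i : Fin k, A i ^ 2 ≤ (n : ℝ) ^ 2 := by
      have : ((2 * G.edgeFinset.card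
          + ∑ i : Fin k, (Finset.univ.filter fun v => c v = i).card ^ 2 : ℕ) : ℝ)
          ≤ ((n ^ 2 : ℕ) : ℝ) := Nat.cast_le.mpr hbound
      push_cast at this
      convert this using 2 <;> push_cast <;> ring
    have hsumR : ∑ i : Fin k, A i = (n : ℝ) := by
      have := congrArg (Nat.cast : ℕ → ℝ) hsum
      push_cast at this
      convert this using 1
    have hCS := sq_sum_le_card_mul_sum_sq
      (s := Finset.univ.erase i0) (f := A)
    have hcarde : ((Finset.univ.erase i0).card : ℝ) = (k : ℝ) - 1 := by
      rw [Finset.card_erase_of_mem (Finset.mem_univ _)]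
      simp only [Finset.card_univ, Fintype.card_fin]
      have : 1 ≤ k := by omega
      push_cast [Nat.cast_sub this]
      ring
    have hsplit1 : A i0 + ∑ i ∈ Finset.univ.erase i0, A i = ∑ i : Fin k, A i :=
      Finset.add_sum_erase _ _ (Finset.mem_univ _)
    have hsplit2 : A i0 ^ 2 + ∑ i ∈ Finset.univ.erase i0, A i ^ 2
        = ∑ i : Fin k, A i ^ 2 :=
      Finset.add_sum_erase _ (fun i => A i ^ 2) (Finset.mem_univ _)
    have f2 : ((n : ℝ) - A i0) ^ 2 ≤ ((k : ℝ) - 1) * ∑ i ∈ Finset.univ.erase i0, A i ^ 2 := by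
      have h1 : ∑ i ∈ Finset.univ.erase i0, A i = (n : ℝ) - A i0 := by
        linarith [hsplit1, hsumR]
      calc ((n : ℝ) - A i0) ^ 2 = (∑ i ∈ Finset.univ.erase i0, A i) ^ 2 := by rw [h1]
        _ ≤ ((Finset.univ.erase i0).card : ℝ) * ∑ i ∈ Finset.univ.erase i0, A i ^ 2 := by
            exact_mod_cast hCS
        _ = ((k : ℝ) - 1) * ∑ i ∈ Finset.univ.erase i0, A i ^ 2 := by rw [hcarde]
    -- deviation
    have hdev' : ((k : ℝ) * s) ^ 2 ≤ ((k : ℝ) * A i0 - (n : ℝ)) ^ 2 := by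
      have hkpos : (0 : ℝ) < (k : ℝ) := by linarith
      have habs : (k : ℝ) * |((V i0).ncard : ℝ) - (n : ℝ) / (k : ℝ)|
          = |(k : ℝ) * ((V i0).ncard : ℝ) - (n : ℝ)| := by
        rw [← abs_of_pos hkpos, ← abs_mul]
        congr 1
        field_simp
        rw [abs_of_pos hkpos]
      have h1 : (k : ℝ) * (s : ℝ) ≤ |(k : ℝ) * ((V i0).ncard : ℝ) - (n : ℝ)| := by
        rw [← habs]
        exact mul_le_mul_of_nonneg_left hdev (le_of_lt hkpos)
      have h2 : ((k : ℝ) * s) ^ 2 ≤ |(k : ℝ) * ((V i0).ncard : ℝ) - (n : ℝ)| ^ 2 := by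
        apply pow_le_pow_left₀ (by positivity) h1
      rw [sq_abs] at h2
      have h3 : ((V i0).ncard : ℝ) = A i0 := by rw [hV i0]
      rw [h3] at h2
      exact h2
    -- Turán edge count
    have hT := turanEdges_real hk0 n
    set T : ℝ := (turanEdges k n : ℝ) with hTdef
    set ρ : ℝ := ((n % k : ℕ) : ℝ) with hρ
    have f6 : 2 * (k : ℝ) * T = ((k : ℝ) - 1) * (n : ℝ) ^ 2 - ρ * ((k : ℝ) - ρ) := by
      rw [hT]
      have : (k : ℝ) ≠ 0 := by linarith
      field_simp
    have f7 : ρ * ((k : ℝ) - ρ) ≤ (k : ℝ) ^ 2 / 4 := by linarith [sq_nonneg ((k : ℝ) - 2 * ρ)]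
    have he0 : 0 ≤ e := by positivity
    -- final assembly
    have hkk : (0 : ℝ) ≤ (k : ℝ) * ((k : ℝ) - 1) :=
      mul_nonneg (by linarith) (by linarith)
    have hk0' : (0 : ℝ) ≤ (k : ℝ) := by linarith
    have hk1' : (0 : ℝ) ≤ (k : ℝ) - 1 := by linarith
    have q1 := mul_le_mul_of_nonneg_left f1 hkk
    have q2 := mul_le_mul_of_nonneg_left f2 hk0'
    have q7 : ((k : ℝ) * ((k : ℝ) - 1)) * (∑ i : Fin k, A i ^ 2)
        = ((k : ℝ) * ((k : ℝ) - 1)) * (A i0 ^ 2 + ∑ i ∈ Finset.univ.erase i0, A i ^ 2) := by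
      rw [hsplit2]
    have hid : (k : ℝ) * ((k : ℝ) - 1) * A i0 ^ 2 + (k : ℝ) * ((n : ℝ) - A i0) ^ 2
        = ((k : ℝ) - 1) * (n : ℝ) ^ 2 + ((k : ℝ) * A i0 - (n : ℝ)) ^ 2 := by ring
    have q3 : ((k : ℝ) - 1) * (2 * (k : ℝ) * T)
        = ((k : ℝ) - 1) * (((k : ℝ) - 1) * (n : ℝ) ^ 2 - ρ * ((k : ℝ) - ρ)) := by rw [f6]
    have q4 := mul_le_mul_of_nonneg_left f7 hk1'
    have q6 := mul_le_mul_of_nonneg_left hsR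
      (mul_nonneg (by positivity) (by linarith) : (0 : ℝ) ≤ 2 * (k : ℝ) ^ 2 * ((k : ℝ) - 1))
    have q8 : (0 : ℝ) ≤ (k : ℝ) * (s : ℝ) ^ 2 := by positivity
    have hfinal : (2 * (k : ℝ) * ((k : ℝ) - 1)) * e
        ≤ (2 * (k : ℝ) * ((k : ℝ) - 1)) * (T - (s : ℝ) * ((s : ℝ) / 2 - (k : ℝ))) := by
      have q9 : (0 : ℝ) ≤ (k : ℝ) ^ 2 * ((k : ℝ) - 1) :=
        mul_nonneg (by positivity) (by linarith)
      linarith [q1, q2, q7, hid, q3, q4, q6, q8, q9, hdev']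
    have hpos : (0 : ℝ) < 2 * (k : ℝ) * ((k : ℝ) - 1) :=
      mul_pos (by linarith) (by linarith)
    have := le_of_mul_le_mul_left hfinal hpos
    rw [hcard]
    exact_mod_cast this
  · -- part (ii)
    have hm : 0 < k - 1 := by omega
    have h1 := turanEdges_real hm n
    have h2 := turanEdges_real hm (n - s)
    have h3 := turanEdges_real hm s
    have hkm : ((k - 1 : ℕ) : ℝ) = (k : ℝ) - 1 := by
      push_cast [Nat.cast_sub (by omega : 1 ≤ k)]
      ring
    have hns : ((n - s : ℕ) : ℝ) = (n : ℝ) - (s : ℝ) := by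
      push_cast [Nat.cast_sub hs2.le]
      ring
    set M : ℝ := ((k - 1 : ℕ) : ℝ) with hM
    have hM1 : (1 : ℝ) ≤ M := by rw [hM]; exact_mod_cast hm
    have hM0 : M ≠ 0 := by linarith
    set ρ1 : ℝ := ((n % (k - 1) : ℕ) : ℝ) with hρ1
    set ρ2 : ℝ := (((n - s) % (k - 1) : ℕ) : ℝ) with hρ2
    set ρ3 : ℝ := ((s % (k - 1) : ℕ) : ℝ) with hρ3
    have hb1 : 0 ≤ ρ1 ∧ ρ1 ≤ M - 1 := by
      constructor
      · positivity
      · have hnat : n % (k - 1) + 1 ≤ k - 1 := by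
          have := Nat.mod_lt n hm
          omega
        have hc := (Nat.cast_le (α := ℝ)).mpr hnat
        rw [Nat.cast_add, Nat.cast_one] at hc
        rw [hρ1, hM]
        linarith
    have hb2 : 0 ≤ ρ2 ∧ ρ2 ≤ M - 1 := by
      constructor
      · positivity
      · have hnat : (n - s) % (k - 1) + 1 ≤ k - 1 := by
          have := Nat.mod_lt (n - s) hm
          omega
        have hc := (Nat.cast_le (α := ℝ)).mpr hnat
        rw [Nat.cast_add, Nat.cast_one] at hc
        rw [hρ2, hM]
        linarith
    have hb3 : 0 ≤ ρ3 ∧ ρ3 ≤ M - 1 := by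
      constructor
      · positivity
      · have hnat : s % (k - 1) + 1 ≤ k - 1 := by
          have := Nat.mod_lt s hm
          omega
        have hc := (Nat.cast_le (α := ℝ)).mpr hnat
        rw [Nat.cast_add, Nat.cast_one] at hc
        rw [hρ3, hM]
        linarith
    rw [h1, h2, h3, hns]
    have hgoal2 : (M - 1) = (k : ℝ) - 2 := by
      rw [hM]
      push_cast [Nat.cast_sub (by omega : 1 ≤ k)]
      ring
    rw [← hkm, ← hgoal2]
    -- key nonnegativity
    have hkey : 0 ≤ ρ2 * (M - ρ2) - ρ1 * (M - ρ1) - ρ3 * (M - ρ3)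
        + 2 * (s : ℝ) * M * (M - 1) := by
      rcases eq_or_lt_of_le hM1 with hMeq | hMgt
      · -- M = 1 : all residues are 0
        have hz1 : ρ1 = 0 := by
          rw [hρ1]
          have : k - 1 = 1 := by
            have := hMeq
            rw [hM] at this
            exact_mod_cast this.symm
          simp [this, Nat.mod_one]
        have hz2 : ρ2 = 0 := by
          rw [hρ2]
          have : k - 1 = 1 := by
            have := hMeq
            rw [hM] at this
            exact_mod_cast this.symm
          simp [this, Nat.mod_one]
        have hz3 : ρ3 = 0 := by
          rw [hρ3]
          have : k - 1 = 1 := by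
            have := hMeq
            rw [hM] at this
            exact_mod_cast this.symm
          simp [this, Nat.mod_one]
        rw [hz1, hz2, hz3]
        have h0 : 2 * (s : ℝ) * M * (M - 1) = 0 := by rw [← hMeq]; ring
        linarith
      · have hM2 : (2 : ℝ) ≤ M := by
          rw [hM] at hMgt ⊢
          have : (1 : ℕ) < k - 1 := by exact_mod_cast hMgt
          exact_mod_cast this
        have hr1 : ρ1 * (M - ρ1) ≤ M ^ 2 / 4 := by linarith [sq_nonneg (M - 2 * ρ1)]
        have hr3 : ρ3 * (M - ρ3) ≤ M ^ 2 / 4 := by linarith [sq_nonneg (M - 2 * ρ3)]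
        have hr2 : 0 ≤ ρ2 * (M - ρ2) := mul_nonneg hb2.1 (by linarith [hb2.2])
        have h9 : (0:ℝ) ≤ ((s:ℝ) - 1) * M * (M - 1) :=
          mul_nonneg (mul_nonneg (by linarith) (by linarith)) (by linarith)
        have h10 : (0:ℝ) ≤ M * (M - 2) := mul_nonneg (by linarith) (by linarith)
        nlinarith [hr1, hr3, hr2, h9, h10]
    have hMpos : (0 : ℝ) < M := by linarith
    rw [← sub_nonneg]
    have hrw : ((n : ℝ) ^ 2 * (1 - 1 / M) - ρ1 * (M - ρ1) / M) / 2
        - ((((n : ℝ) - (s : ℝ)) ^ 2 * (1 - 1 / M) - ρ2 * (M - ρ2) / M) / 2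
          + (s : ℝ) * (n : ℝ) * (M - 1) / M - (s : ℝ) * (M - 1)
          - ((s : ℝ) ^ 2 * (1 - 1 / M) - ρ3 * (M - ρ3) / M) / 2)
        = (ρ2 * (M - ρ2) - ρ1 * (M - ρ1) - ρ3 * (M - ρ3)
            + 2 * (s : ℝ) * M * (M - 1)) / (2 * M) := by
      field_simp
      ring
    calc (0 : ℝ) ≤ (ρ2 * (M - ρ2) - ρ1 * (M - ρ1) - ρ3 * (M - ρ3)
        + 2 * (s : ℝ) * M * (M - 1)) / (2 * M) := by positivity
      _ = _ := by rw [← hrw]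
end

section
/- Let k ≥ 6. There exists n_0 ∈ ℕ such that the following holds for every n ≥ n_0. Let Q be a balanced ordered (k−1)-partition of [n] (all class sizes differ by at most one). Then the number of k-templates G on Q such that the complement of G[Q_0] has at most one component with at least two vertices is at most 2^{−n} times the total number of k-templates on Q. -/
open SimpleGraph

/-! ### Auxiliary lemmas for `two_components` -/

private lemma TC.finite_graph {V : Type*} [Finite V] : Finite (SimpleGraph V) :=
  Finite.of_injective (fun G => G.Adj) (fun _ _ h => SimpleGraph.ext h)

private lemma TC.pow_le_fac (c t : ℕ) (hc : 1 ≤ c) :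
    c ^ t ≤ c ^ (2 * c) * t.factorial := by
  induction t with
  | zero => simpa using Nat.one_le_pow (2*c) c (by omega)
  | succ t ih =>
    by_cases h : t + 1 ≤ 2 * c
    · calc c ^ (t + 1) ≤ c ^ (2 * c) := Nat.pow_le_pow_right hc h
        _ ≤ c ^ (2 * c) * (t + 1).factorial :=
            Nat.le_mul_of_pos_right _ (Nat.factorial_pos _)
    · push_neg at h
      calc c ^ (t + 1) = c ^ t * c := by ring
        _ ≤ (c ^ (2 * c) * t.factorial) * (t + 1) := Nat.mul_le_mul ih (by omega)
        _ = c ^ (2 * c) * (t + 1).factorial := by rw [Nat.factorial_succ]; ring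

open SimpleGraph in
private lemma TC.star_key {W : Type*} [Finite W] (K : SimpleGraph W)
    (h1 : ∀ c : K.ConnectedComponent,
      IsStarGraph (K.induce c.supp) ∨ IsTriangleGraph (K.induce c.supp))
    (h2 : {c : K.ConnectedComponent | 2 ≤ Nat.card c.supp}.Subsingleton)
    (c : W) (hc : ∀ v, (K.neighborSet v).ncard ≤ (K.neighborSet c).ncard) (u v : W) :
    K.Adj u v ↔
      (u = c ∧ v ∈ K.neighborSet c) ∨ (v = c ∧ u ∈ K.neighborSet c) ∨
      ((∃ x ∈ K.neighborSet c, ∃ y ∈ K.neighborSet c, K.Adj x y) ∧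
        u ∈ K.neighborSet c ∧ v ∈ K.neighborSet c ∧ u ≠ v) := by
  have hfin : ∀ s : Set W, s.Finite := fun s => Set.toFinite s
  by_cases hE : ∃ x y, K.Adj x y
  · obtain ⟨x0, y0, hxy0⟩ := hE
    have hd0 : 1 ≤ (K.neighborSet c).ncard := by
      refine le_trans ?_ (hc x0)
      have h0 : y0 ∈ K.neighborSet x0 := (K.mem_neighborSet x0 y0).2 hxy0
      have := (Set.ncard_pos (hfin _)).2 ⟨y0, h0⟩
      omega
    obtain ⟨w0, hw0⟩ : (K.neighborSet c).Nonempty := by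
      rw [← Set.ncard_pos (hfin _)]; omega
    have hw0' : K.Adj c w0 := (K.mem_neighborSet c w0).1 hw0
    have two_le : ∀ a b, K.Adj a b → 2 ≤ Nat.card (K.connectedComponentMk a).supp := by
      intro a b hab
      rw [Nat.card_coe_set_eq]
      have h1lt : 1 < ((K.connectedComponentMk a).supp).ncard := by
        rw [Set.one_lt_ncard_iff (hfin _)]
        exact ⟨a, b, (ConnectedComponent.mem_supp_iff _ _).2 rfl,
          (ConnectedComponent.mem_supp_iff _ _).2
            (ConnectedComponent.connectedComponentMk_eq_of_adj hab.symm), hab.ne⟩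
      omega
    have comp_eq : ∀ a b, K.Adj a b →
        K.connectedComponentMk a = K.connectedComponentMk c :=
      fun a b hab => h2 (two_le a b hab) (two_le c w0 hw0')
    have memS : ∀ a b, K.Adj a b → a ∈ (K.connectedComponentMk c).supp :=
      fun a b hab => (ConnectedComponent.mem_supp_iff _ _).2 (comp_eq a b hab)
    have hcS : c ∈ (K.connectedComponentMk c).supp :=
      (ConnectedComponent.mem_supp_iff _ _).2 rfl
    rcases h1 (K.connectedComponentMk c) with hstar | htri
    · -- star case: every edge touches c
      have touch : ∀ a b, K.Adj a b → a = c ∨ b = c := by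
        intro a b hab
        by_contra hcon
        push_neg at hcon
        obtain ⟨hac, hbc⟩ := hcon
        have deg1 : ∀ x y, K.Adj x y → x ≠ c → (K.neighborSet x).ncard ≤ 1 := by
          intro x y hxy hxc
          by_contra hgt
          push_neg at hgt
          obtain ⟨p, q, hp, hq, hpq⟩ := (Set.one_lt_ncard_iff (hfin _)).1 hgt
          have hcx : 1 < (K.neighborSet c).ncard := lt_of_lt_of_le hgt (hc x)
          obtain ⟨p', q', hp', hq', hpq'⟩ := (Set.one_lt_ncard_iff (hfin _)).1 hcx
          have hxS := memS x y hxy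
          have hp1 : K.Adj x p := (K.mem_neighborSet x p).1 hp
          have hq1 : K.Adj x q := (K.mem_neighborSet x q).1 hq
          have hp1' : K.Adj c p' := (K.mem_neighborSet c p').1 hp'
          have hq1' : K.Adj c q' := (K.mem_neighborSet c q').1 hq'
          have hmem1 : (⟨x, hxS⟩ : (K.connectedComponentMk c).supp) ∈
              {v : (K.connectedComponentMk c).supp | ∃ a b, a ≠ b ∧
                (K.induce _).Adj v a ∧ (K.induce _).Adj v b} := by
            refine ⟨⟨p, memS p x hp1.symm⟩, ⟨q, memS q x hq1.symm⟩,
              ?_, by simpa using hp1, by simpa using hq1⟩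
            simp only [ne_eq, Subtype.mk.injEq]
            exact hpq
          have hmem2 : (⟨c, hcS⟩ : (K.connectedComponentMk c).supp) ∈
              {v : (K.connectedComponentMk c).supp | ∃ a b, a ≠ b ∧
                (K.induce _).Adj v a ∧ (K.induce _).Adj v b} := by
            refine ⟨⟨p', memS p' c hp1'.symm⟩, ⟨q', memS q' c hq1'.symm⟩,
              ?_, by simpa using hp1', by simpa using hq1'⟩
            simp only [ne_eq, Subtype.mk.injEq]
            exact hpq'
          have := hstar hmem1 hmem2
          exact hxc (congrArg Subtype.val this)
        have hna : K.neighborSet a = {b} := by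
          apply Set.eq_singleton_iff_unique_mem.2
          refine ⟨(K.mem_neighborSet a b).2 hab, fun y hy => ?_⟩
          exact (Set.ncard_le_one (hfin _)).1 (deg1 a b hab hac) y hy b
            ((K.mem_neighborSet a b).2 hab)
        have hnb : K.neighborSet b = {a} := by
          apply Set.eq_singleton_iff_unique_mem.2
          refine ⟨(K.mem_neighborSet b a).2 hab.symm, fun y hy => ?_⟩
          exact (Set.ncard_le_one (hfin _)).1 (deg1 b a hab.symm hbc) y hy a
            ((K.mem_neighborSet b a).2 hab.symm)
        have closed : ∀ x w (p : K.Walk x w), (x = a ∨ x = b) → (w = a ∨ w = b) := by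
          intro x w p
          induction p with
          | nil => exact id
          | cons hadj q ih =>
            rename_i x' z w'
            intro hx
            apply ih
            rcases hx with rfl | rfl
            · right
              have : z ∈ K.neighborSet x' := (K.mem_neighborSet x' z).2 hadj
              rw [hna] at this
              exact this
            · left
              have : z ∈ K.neighborSet x' := (K.mem_neighborSet x' z).2 hadj
              rw [hnb] at this
              exact this
        have hreach : K.Reachable a c := ConnectedComponent.exact (comp_eq a b hab)
        obtain ⟨p⟩ := hreach
        rcases closed a c p (Or.inl rfl) with h | h
        · exact hac h.symm
        · exact hbc h.symm
      have hbf : ¬ (∃ x ∈ K.neighborSet c, ∃ y ∈ K.neighborSet c, K.Adj x y) := by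
        rintro ⟨x, hx, y, hy, hxy⟩
        rcases touch x y hxy with rfl | rfl
        · exact K.irrefl ((K.mem_neighborSet x x).1 hx)
        · exact K.irrefl ((K.mem_neighborSet y y).1 hy)
      constructor
      · intro h
        rcases touch u v h with rfl | rfl
        · exact Or.inl ⟨rfl, (K.mem_neighborSet u v).2 h⟩
        · exact Or.inr (Or.inl ⟨rfl, (K.mem_neighborSet v u).2 h.symm⟩)
      · rintro (⟨rfl, hv⟩ | ⟨rfl, hu⟩ | ⟨hb, _⟩)
        · exact (K.mem_neighborSet u v).1 hv
        · exact ((K.mem_neighborSet v u).1 hu).symm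
        · exact absurd hb hbf
    · obtain ⟨hcard3, hclq⟩ := htri
      have hclq' : ∀ a b, a ∈ (K.connectedComponentMk c).supp →
          b ∈ (K.connectedComponentMk c).supp → a ≠ b → K.Adj a b := by
        intro a b ha hb hab
        have := hclq ⟨a, ha⟩ ⟨b, hb⟩ (by simp only [ne_eq, Subtype.mk.injEq]; exact hab)
        simpa using this
      have hN : K.neighborSet c = (K.connectedComponentMk c).supp \ {c} := by
        ext x
        simp only [mem_neighborSet, Set.mem_diff, Set.mem_singleton_iff]
        constructor
        · intro h
          exact ⟨memS x c h.symm, fun hxc => K.irrefl (hxc ▸ h)⟩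
        · rintro ⟨hxS, hxc⟩
          exact hclq' c x hcS hxS (Ne.symm hxc)
      have hsupp_card : ((K.connectedComponentMk c).supp).ncard = 3 := by
        rw [← Nat.card_coe_set_eq]; exact hcard3
      have hNcard : (K.neighborSet c).ncard = 2 := by
        rw [hN, Set.ncard_diff_singleton_of_mem hcS, hsupp_card]
      have hb : ∃ x ∈ K.neighborSet c, ∃ y ∈ K.neighborSet c, K.Adj x y := by
        obtain ⟨x, y, hx, hy, hxy⟩ := (Set.one_lt_ncard_iff (hfin _)).1
          (by omega : 1 < (K.neighborSet c).ncard)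
        refine ⟨x, hx, y, hy, ?_⟩
        rw [hN] at hx hy
        exact hclq' x y hx.1 hy.1 hxy
      constructor
      · intro h
        by_cases huc : u = c
        · subst huc
          exact Or.inl ⟨rfl, (K.mem_neighborSet u v).2 h⟩
        by_cases hvc : v = c
        · subst hvc
          exact Or.inr (Or.inl ⟨rfl, (K.mem_neighborSet v u).2 h.symm⟩)
        · refine Or.inr (Or.inr ⟨hb, ?_, ?_, h.ne⟩)
          · rw [hN]; exact ⟨memS u v h, huc⟩
          · rw [hN]; exact ⟨memS v u h.symm, hvc⟩
      · rintro (⟨rfl, hv⟩ | ⟨rfl, hu⟩ | ⟨_, hu, hv, huv⟩)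
        · exact (K.mem_neighborSet u v).1 hv
        · exact ((K.mem_neighborSet v u).1 hu).symm
        · rw [hN] at hu hv
          exact hclq' u v hu.1 hv.1 huv
  · push_neg at hE
    have hNempty : K.neighborSet c = ∅ := by
      ext x
      simp only [mem_neighborSet, Set.mem_empty_iff_false, iff_false]
      exact hE c x
    simp [hNempty, hE u v]

open SimpleGraph in
private lemma TC.SA_card {W : Type*} [Fintype W] [Nonempty W] :
    Nat.card {H : SimpleGraph W // UnionOfStarsAndTriangles Hᶜ ∧
      {c : Hᶜ.ConnectedComponent | 2 ≤ Nat.card c.supp}.Subsingleton} ≤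
    Fintype.card W * (2 ^ Fintype.card W * 2) := by
  classical
  let F : {H : SimpleGraph W // UnionOfStarsAndTriangles Hᶜ ∧
      {c : Hᶜ.ConnectedComponent | 2 ≤ Nat.card c.supp}.Subsingleton} →
      W × Finset W × Prop := fun H =>
    (Classical.choose (Finite.exists_max fun v => ((H.1ᶜ.neighborSet v).ncard)),
      (Set.toFinite (H.1ᶜ.neighborSet
        (Classical.choose (Finite.exists_max fun v => ((H.1ᶜ.neighborSet v).ncard))))).toFinset,
      ∃ x ∈ H.1ᶜ.neighborSet
          (Classical.choose (Finite.exists_max fun v => ((H.1ᶜ.neighborSet v).ncard))),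
        ∃ y ∈ H.1ᶜ.neighborSet
          (Classical.choose (Finite.exists_max fun v => ((H.1ᶜ.neighborSet v).ncard))),
          H.1ᶜ.Adj x y)
  have hinj : Function.Injective F := by
    intro H1 H2 h
    have h1 := congrArg Prod.fst h
    have h2 := congrArg (fun p => p.2.1) h
    have h3 := congrArg (fun p => p.2.2) h
    simp only [F] at h1 h2 h3
    set c1 := Classical.choose (Finite.exists_max fun v => ((H1.1ᶜ.neighborSet v).ncard)) with hc1
    set c2 := Classical.choose (Finite.exists_max fun v => ((H2.1ᶜ.neighborSet v).ncard)) with hc2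
    have hs1 := Classical.choose_spec (Finite.exists_max fun v => ((H1.1ᶜ.neighborSet v).ncard))
    have hs2 := Classical.choose_spec (Finite.exists_max fun v => ((H2.1ᶜ.neighborSet v).ncard))
    rw [← hc1] at hs1
    rw [← hc2] at hs2
    have hNeq : H1.1ᶜ.neighborSet c1 = H2.1ᶜ.neighborSet c2 :=
      Set.Finite.toFinset_inj.1 h2
    have hcompl : H1.1ᶜ = H2.1ᶜ := by
      ext u v
      rw [TC.star_key H1.1ᶜ H1.2.1 H1.2.2 c1 hs1 u v,
        TC.star_key H2.1ᶜ H2.2.1 H2.2.2 c2 hs2 u v, h3, ← h1, hNeq, ← h1]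
    have : H1.1 = H2.1 := by
      have := congrArg (·ᶜ) hcompl
      simpa using this
    exact Subtype.ext this
  calc Nat.card {H : SimpleGraph W // UnionOfStarsAndTriangles Hᶜ ∧
        {c : Hᶜ.ConnectedComponent | 2 ≤ Nat.card c.supp}.Subsingleton}
      ≤ Nat.card (W × Finset W × Prop) := by
        have : Finite (SimpleGraph W) := TC.finite_graph
        exact Nat.card_le_card_of_injective F hinj
    _ = Fintype.card W * (2 ^ Fintype.card W * 2) := by
        simp [Nat.card_eq_fintype_card, Fintype.card_finset, Fintype.card_prop]

open SimpleGraph in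
private lemma TC.SB_card {W : Type*} [Fintype W] (t : ℕ) (ht : 2 * t ≤ Fintype.card W) :
    t.factorial ≤ Nat.card {H : SimpleGraph W // UnionOfStarsAndTriangles Hᶜ} := by
  classical
  let e := (Fintype.equivFin W).symm
  let l : Fin t → W := fun i => e ⟨i, by have := i.isLt; omega⟩
  let r : Fin t → W := fun i => e ⟨t + i, by have := i.isLt; omega⟩
  have hlr : ∀ i j, l i ≠ r j := by
    intro i j h
    have := e.injective h
    rw [Fin.ext_iff] at this
    simp only at this
    have hi := i.isLt
    omega
  have hlinj : Function.Injective l := by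
    intro i j h
    have := e.injective h
    rw [Fin.ext_iff] at this
    simp only at this
    exact Fin.ext this
  have hrinj : Function.Injective r := by
    intro i j h
    have := e.injective h
    rw [Fin.ext_iff] at this
    simp only at this
    exact Fin.ext (by omega)
  let M : Equiv.Perm (Fin t) → SimpleGraph W := fun sg =>
    { Adj := fun u v => ∃ i, (u = l i ∧ v = r (sg i)) ∨ (v = l i ∧ u = r (sg i))
      symm := ⟨by rintro u v ⟨i, h⟩; exact ⟨i, h.symm⟩⟩
      loopless := ⟨by
        rintro u ⟨i, (⟨h1, h2⟩ | ⟨h1, h2⟩)⟩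
        · exact hlr i (sg i) (h1.symm.trans h2)
        · exact hlr i (sg i) (h1.symm.trans h2)⟩ }
  have Mdeg : ∀ sg u a b, (M sg).Adj u a → (M sg).Adj u b → a = b := by
    rintro sg u a b ⟨i, hi⟩ ⟨j, hj⟩
    rcases hi with ⟨h1, h2⟩ | ⟨h1, h2⟩ <;> rcases hj with ⟨h3, h4⟩ | ⟨h3, h4⟩
    · have : i = j := hlinj (h1.symm.trans h3)
      subst this
      exact h2.trans h4.symm
    · exact absurd (h1.symm.trans h4) (hlr _ _)
    · exact absurd (h3.symm.trans h2) (hlr _ _)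
    · have : sg i = sg j := hrinj (h2.symm.trans h4)
      have : i = j := sg.injective this
      subst this
      exact h1.trans h3.symm
  have hmem : ∀ sg, UnionOfStarsAndTriangles ((M sg)ᶜ)ᶜ := by
    intro sg
    rw [compl_compl]
    intro comp
    left
    intro x hx y hy
    exfalso
    obtain ⟨a, b, hab, hxa, hxb⟩ := hx
    have hxa' : (M sg).Adj ↑x ↑a := by simpa using hxa
    have hxb' : (M sg).Adj ↑x ↑b := by simpa using hxb
    exact hab (Subtype.coe_injective (Mdeg sg ↑x ↑a ↑b hxa' hxb'))
  have hinj : Function.Injective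
      (fun sg => (⟨(M sg)ᶜ, hmem sg⟩ :
        {H : SimpleGraph W // UnionOfStarsAndTriangles Hᶜ})) := by
    intro sg tg h
    have hMM : M sg = M tg := by
      have h' : (M sg)ᶜ = (M tg)ᶜ := congrArg Subtype.val h
      have := congrArg (·ᶜ) h'
      simpa using this
    apply Equiv.ext
    intro i
    have hadj : (M sg).Adj (l i) (r (sg i)) := ⟨i, Or.inl ⟨rfl, rfl⟩⟩
    rw [hMM] at hadj
    obtain ⟨j, hj⟩ := hadj
    rcases hj with ⟨h3, h4⟩ | ⟨h3, h4⟩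
    · have hij : i = j := hlinj h3
      subst hij
      exact hrinj h4
    · exact absurd h4 (hlr _ _)
  have : Finite (SimpleGraph W) := TC.finite_graph
  calc t.factorial = Nat.card (Equiv.Perm (Fin t)) := by
        simp [Nat.card_eq_fintype_card, Fintype.card_perm]
    _ ≤ Nat.card {H : SimpleGraph W // UnionOfStarsAndTriangles Hᶜ} :=
        Nat.card_le_card_of_injective _ hinj

private def TC.erase {n : ℕ} (Q0 : Set (Fin n)) (G : SimpleGraph (Fin n)) :
    SimpleGraph (Fin n) where
  Adj u v := G.Adj u v ∧ ¬(u ∈ Q0 ∧ v ∈ Q0)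
  symm := ⟨fun u v h => ⟨h.1.symm, fun hh => h.2 ⟨hh.2, hh.1⟩⟩⟩
  loopless := ⟨fun u h => G.irrefl h.1⟩

private def TC.join {n : ℕ} (Q0 : Set (Fin n)) (H : SimpleGraph ↥Q0)
    (t : SimpleGraph (Fin n)) : SimpleGraph (Fin n) where
  Adj u v := (∃ hu : u ∈ Q0, ∃ hv : v ∈ Q0, H.Adj ⟨u, hu⟩ ⟨v, hv⟩) ∨ t.Adj u v
  symm := ⟨fun u v h => by
    rcases h with ⟨hu, hv, h⟩ | h
    · exact Or.inl ⟨hv, hu, h.symm⟩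
    · exact Or.inr h.symm⟩
  loopless := ⟨fun u h => by
    rcases h with ⟨hu, _, h⟩ | h
    · exact H.irrefl h
    · exact t.irrefl h⟩

private lemma TC.join_induce {n : ℕ} (Q0 : Set (Fin n)) (H : SimpleGraph ↥Q0)
    (t : SimpleGraph (Fin n)) (ht : ∀ u v, u ∈ Q0 → v ∈ Q0 → ¬ t.Adj u v) :
    (TC.join Q0 H t).induce Q0 = H := by
  ext ⟨u, hu⟩ ⟨v, hv⟩
  simp only [SimpleGraph.comap_adj, Function.Embedding.coe_subtype, TC.join]
  constructor
  · rintro (⟨hu', hv', h⟩ | h)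
    · exact h
    · exact absurd h (ht u v hu hv)
  · intro h
    exact Or.inl ⟨hu, hv, h⟩

private lemma TC.erase_join {n : ℕ} (Q0 : Set (Fin n)) (H : SimpleGraph ↥Q0)
    (t : SimpleGraph (Fin n)) (ht : ∀ u v, u ∈ Q0 → v ∈ Q0 → ¬ t.Adj u v) :
    TC.erase Q0 (TC.join Q0 H t) = t := by
  ext u v
  simp only [TC.erase, TC.join]
  constructor
  · rintro ⟨(⟨hu, hv, h⟩ | h), hn⟩
    · exact absurd ⟨hu, hv⟩ hn
    · exact h
  · intro h
    refine ⟨Or.inr h, fun hn => ht u v hn.1 hn.2 h⟩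

private lemma TC.join_erase {n : ℕ} (Q0 : Set (Fin n)) (G : SimpleGraph (Fin n)) :
    TC.join Q0 (G.induce Q0) (TC.erase Q0 G) = G := by
  ext u v
  simp only [TC.erase, TC.join, SimpleGraph.comap_adj, Function.Embedding.coe_subtype]
  constructor
  · rintro (⟨hu, hv, h⟩ | h)
    · exact h
    · exact h.1
  · intro h
    by_cases hb : u ∈ Q0 ∧ v ∈ Q0
    · exact Or.inl ⟨hb.1, hb.2, h⟩
    · exact Or.inr ⟨h, hb⟩

private lemma TC.tcp_iff (k : ℕ) (hk : 6 ≤ k) {W : Type*} (H : SimpleGraph W) :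
    TemplateClassProp k H ↔ UnionOfStarsAndTriangles H := by
  unfold TemplateClassProp
  rw [if_neg (by omega), if_neg (by omega)]

/-- (Proposition: two components.) Let `k ≥ 6`. For all sufficiently
large `n` and every balanced ordered `(k−1)`-partition `Q` of `[n]`, the proportion of
`k`-templates `G` on `Q` such that the complement of `G[Q₀]` has at most one non-trivial
component is at most `2^{−n}`. -/
theorem two_components (k : ℕ) (hk : 6 ≤ k) :
    ∃ n0 : ℕ, ∀ n : ℕ, n0 ≤ n →
      ∀ Q : Fin (k - 1) → Set (Fin n), IsPartition Q →
        (∀ i j : Fin (k - 1), (Q i).ncard ≤ (Q j).ncard + 1) →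
        (({G : SimpleGraph (Fin n) | IsKTemplateOn k G Q ∧
            ∀ i : Fin (k - 1), (i : ℕ) = 0 →
              {c : ((G.induce (Q i))ᶜ).ConnectedComponent |
                2 ≤ Nat.card c.supp}.Subsingleton}).ncard : ℝ) ≤
          (2 : ℝ) ^ (-(n : ℝ)) *
            (({G : SimpleGraph (Fin n) | IsKTemplateOn k G Q}).ncard : ℝ) := by
  classical
  set E := (2 * k + 4) * (2 * 2 ^ (2 * k + 4)) with hEdef
  refine ⟨(k - 1) * (E + 2 * k + 3), ?_⟩
  intro n hn Q hQ hbal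
  haveI : Finite (SimpleGraph (Fin n)) := TC.finite_graph
  have hpos : 0 < k - 1 := by omega
  let i0 : Fin (k - 1) := ⟨0, hpos⟩
  haveI : Fintype ↥(Q i0) := Fintype.ofFinite _
  haveI : Finite (SimpleGraph ↥(Q i0)) := TC.finite_graph
  set m := Fintype.card ↥(Q i0) with hm
  have hmQ : (Q i0).ncard = m := by
    rw [← Nat.card_coe_set_eq, Nat.card_eq_fintype_card]
  -- covering bound : n ≤ (k-1) * (m+1)
  have hcover : (Finset.univ : Finset (Fin n)) ⊆
      Finset.univ.biUnion (fun i => (Q i).toFinset) := by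
    intro x _
    obtain ⟨i, hi, _⟩ := hQ x
    exact Finset.mem_biUnion.2 ⟨i, Finset.mem_univ i, Set.mem_toFinset.2 hi⟩
  have hsum : n ≤ (k - 1) * (m + 1) := by
    calc n = (Finset.univ : Finset (Fin n)).card := by simp
      _ ≤ (Finset.univ.biUnion (fun i => (Q i).toFinset)).card :=
          Finset.card_le_card hcover
      _ ≤ ∑ i : Fin (k - 1), (Q i).toFinset.card := Finset.card_biUnion_le
      _ ≤ ∑ _i : Fin (k - 1), (m + 1) := Finset.sum_le_sum (fun i _ => by
          rw [← Set.ncard_eq_toFinset_card']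
          have h1 := hbal i i0
          omega)
      _ = (k - 1) * (m + 1) := by
          rw [Finset.sum_const, Finset.card_univ, Fintype.card_fin, smul_eq_mul]
  -- arithmetic
  have hE1 : 0 < E := by rw [hEdef]; positivity
  have h3 : E + 2 * k + 3 ≤ m + 1 := by
    have h2 : (k - 1) * (E + 2 * k + 3) ≤ (k - 1) * (m + 1) := le_trans hn hsum
    exact Nat.le_of_mul_le_mul_left h2 hpos
  have hm1 : 1 ≤ m := by omega
  have hkm : n + E + k + 3 ≤ k * m := by
    have h4 : k * (m + 1) = (k - 1) * (m + 1) + (m + 1) := by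
      have hk1 : k = (k - 1) + 1 := by omega
      calc k * (m + 1) = ((k - 1) + 1) * (m + 1) := by rw [← hk1]
        _ = (k - 1) * (m + 1) + (m + 1) := by ring
    have h5 : k * (m + 1) = k * m + k := by ring
    omega
  have h8 : E + 2 * m + n + 1 ≤ (k + 2) * (m - 1) := by
    have hx : (k + 2) * (m - 1) + (k + 2) = k * m + 2 * m := by
      have hm2 : m - 1 + 1 = m := by omega
      calc (k + 2) * (m - 1) + (k + 2) = (k + 2) * ((m - 1) + 1) := by ring
        _ = (k + 2) * m := by rw [hm2]
        _ = k * m + 2 * m := by ring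
    omega
  set mhalf := m / 2 with hmhalf
  have h9 : (k + 2) * (m - 1) ≤ (2 * k + 4) * mhalf := by
    have h2t : m - 1 ≤ 2 * mhalf := by omega
    calc (k + 2) * (m - 1) ≤ (k + 2) * (2 * mhalf) := Nat.mul_le_mul_left _ h2t
      _ = (2 * k + 4) * mhalf := by ring
  have harith : m * (2 ^ m * 2) * 2 ^ n ≤ mhalf.factorial := by
    have hle1 : m * (2 ^ m * 2) * 2 ^ n ≤ 2 ^ (2 * m + n + 1) := by
      have hm2 : m ≤ 2 ^ m := (Nat.lt_two_pow_self (n := m)).le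
      calc m * (2 ^ m * 2) * 2 ^ n ≤ 2 ^ m * (2 ^ m * 2) * 2 ^ n :=
            Nat.mul_le_mul_right _ (Nat.mul_le_mul_right _ hm2)
        _ = 2 ^ (2 * m + n + 1) := by
            rw [show 2 * m + n + 1 = (m + (m + 1)) + n by ring, pow_add, pow_add, pow_succ]
    have hchain : 2 ^ E * (m * (2 ^ m * 2) * 2 ^ n) ≤ 2 ^ E * mhalf.factorial := by
      calc 2 ^ E * (m * (2 ^ m * 2) * 2 ^ n) ≤ 2 ^ E * 2 ^ (2 * m + n + 1) :=
            Nat.mul_le_mul_left _ hle1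
        _ = 2 ^ (E + (2 * m + n + 1)) := (pow_add 2 E _).symm
        _ ≤ 2 ^ ((k + 2) * (m - 1)) := Nat.pow_le_pow_right (by norm_num) (by omega)
        _ ≤ 2 ^ ((2 * k + 4) * mhalf) := Nat.pow_le_pow_right (by norm_num) h9
        _ = (2 ^ (2 * k + 4)) ^ mhalf := pow_mul 2 _ mhalf
        _ ≤ (2 ^ (2 * k + 4)) ^ (2 * 2 ^ (2 * k + 4)) * mhalf.factorial :=
            TC.pow_le_fac _ mhalf (Nat.one_le_pow _ _ (by norm_num))
        _ = 2 ^ E * mhalf.factorial := by rw [hEdef, ← pow_mul]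
    exact Nat.le_of_mul_le_mul_left hchain (by positivity)
  -- partition helpers
  have hi0eq : ∀ i : Fin (k - 1), (i : ℕ) = 0 → i = i0 := fun i hi => Fin.ext hi
  have huniq : ∀ (x : Fin n) (i j : Fin (k - 1)), x ∈ Q i → x ∈ Q j → i = j := by
    intro x i j hi hj
    obtain ⟨l, _, hu⟩ := hQ x
    rw [hu i hi, hu j hj]
  -- main natural-number inequality
  have main : ({G : SimpleGraph (Fin n) | IsKTemplateOn k G Q ∧
        ∀ i : Fin (k - 1), (i : ℕ) = 0 →
          {c : ((G.induce (Q i))ᶜ).ConnectedComponent |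
            2 ≤ Nat.card c.supp}.Subsingleton}).ncard * 2 ^ n ≤
      ({G : SimpleGraph (Fin n) | IsKTemplateOn k G Q}).ncard := by
    set As := {G : SimpleGraph (Fin n) | IsKTemplateOn k G Q ∧
        ∀ i : Fin (k - 1), (i : ℕ) = 0 →
          {c : ((G.induce (Q i))ᶜ).ConnectedComponent |
            2 ≤ Nat.card c.supp}.Subsingleton} with hAs
    set Bs := {G : SimpleGraph (Fin n) | IsKTemplateOn k G Q} with hBs
    -- the internal/external decomposition
    have hmemSA : ∀ G : ↥As, UnionOfStarsAndTriangles ((G.1.induce (Q i0))ᶜ) ∧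
        {c : ((G.1.induce (Q i0))ᶜ).ConnectedComponent |
          2 ≤ Nat.card c.supp}.Subsingleton := by
      rintro ⟨G, hT, hS⟩
      exact ⟨(TC.tcp_iff k hk _).1 (hT.2.2 i0 rfl), hS i0 rfl⟩
    have hmemTT : ∀ G : SimpleGraph (Fin n), IsKTemplateOn k G Q →
        (∀ i : Fin (k - 1), (i : ℕ) ≠ 0 →
          IsCliqueGraph ((TC.erase (Q i0) G).induce (Q i))) ∧
        ∀ u v, u ∈ Q i0 → v ∈ Q i0 → ¬ (TC.erase (Q i0) G).Adj u v := by
      intro G hT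
      constructor
      · intro i hi u v huv
        have hadj : G.Adj ↑u ↑v := by simpa using hT.2.1 i hi u v huv
        have h' : (TC.erase (Q i0) G).Adj ↑u ↑v := by
          refine ⟨hadj, ?_⟩
          rintro ⟨hu0, hv0⟩
          exact hi (by rw [huniq ↑u i i0 u.2 hu0])
        simpa using h'
      · intro u v hu hv hadj
        exact hadj.2 ⟨hu, hv⟩
    let Φ : ↥As → {H : SimpleGraph ↥(Q i0) // UnionOfStarsAndTriangles Hᶜ ∧
          {c : Hᶜ.ConnectedComponent | 2 ≤ Nat.card c.supp}.Subsingleton} ×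
        {t : SimpleGraph (Fin n) // (∀ i : Fin (k - 1), (i : ℕ) ≠ 0 →
            IsCliqueGraph (t.induce (Q i))) ∧
          ∀ u v, u ∈ Q i0 → v ∈ Q i0 → ¬ t.Adj u v} :=
      fun G => (⟨G.1.induce (Q i0), hmemSA G⟩,
        ⟨TC.erase (Q i0) G.1, hmemTT G.1 G.2.1⟩)
    have hΦ : Function.Injective Φ := by
      intro G1 G2 h
      have h1 : G1.1.induce (Q i0) = G2.1.induce (Q i0) :=
        congrArg (fun p => p.1.1) h
      have h2 : TC.erase (Q i0) G1.1 = TC.erase (Q i0) G2.1 :=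
        congrArg (fun p => p.2.1) h
      apply Subtype.ext
      rw [← TC.join_erase (Q i0) G1.1, h1, h2, TC.join_erase]
    have hAcard : Nat.card ↥As ≤
        Nat.card {H : SimpleGraph ↥(Q i0) // UnionOfStarsAndTriangles Hᶜ ∧
          {c : Hᶜ.ConnectedComponent | 2 ≤ Nat.card c.supp}.Subsingleton} *
        Nat.card {t : SimpleGraph (Fin n) // (∀ i : Fin (k - 1), (i : ℕ) ≠ 0 →
            IsCliqueGraph (t.induce (Q i))) ∧
          ∀ u v, u ∈ Q i0 → v ∈ Q i0 → ¬ t.Adj u v} :=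
      le_of_le_of_eq (Nat.card_le_card_of_injective Φ hΦ) (Nat.card_prod _ _)
    -- join injection
    have hmemB : ∀ (H : {H : SimpleGraph ↥(Q i0) // UnionOfStarsAndTriangles Hᶜ})
        (t : {t : SimpleGraph (Fin n) // (∀ i : Fin (k - 1), (i : ℕ) ≠ 0 →
            IsCliqueGraph (t.induce (Q i))) ∧
          ∀ u v, u ∈ Q i0 → v ∈ Q i0 → ¬ t.Adj u v}),
        IsKTemplateOn k (TC.join (Q i0) H.1 t.1) Q := by
      intro H t
      refine ⟨hQ, ?_, ?_⟩
      · intro i hi u v huv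
        have hadj : t.1.Adj ↑u ↑v := by simpa using t.2.1 i hi u v huv
        have h' : (TC.join (Q i0) H.1 t.1).Adj ↑u ↑v := Or.inr hadj
        simpa using h'
      · intro i hi
        rw [hi0eq i hi, TC.join_induce (Q i0) H.1 t.1 t.2.2]
        exact (TC.tcp_iff k hk _).2 H.2
    let Ψ : {H : SimpleGraph ↥(Q i0) // UnionOfStarsAndTriangles Hᶜ} ×
        {t : SimpleGraph (Fin n) // (∀ i : Fin (k - 1), (i : ℕ) ≠ 0 →
            IsCliqueGraph (t.induce (Q i))) ∧
          ∀ u v, u ∈ Q i0 → v ∈ Q i0 → ¬ t.Adj u v} → ↥Bs :=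
      fun p => ⟨TC.join (Q i0) p.1.1 p.2.1, hmemB p.1 p.2⟩
    have hΨ : Function.Injective Ψ := by
      intro p1 p2 h
      have h' : TC.join (Q i0) p1.1.1 p1.2.1 = TC.join (Q i0) p2.1.1 p2.2.1 :=
        congrArg Subtype.val h
      have hH : p1.1.1 = p2.1.1 := by
        rw [← TC.join_induce (Q i0) p1.1.1 p1.2.1 p1.2.2.2, h',
          TC.join_induce (Q i0) p2.1.1 p2.2.1 p2.2.2.2]
      have ht : p1.2.1 = p2.2.1 := by
        rw [← TC.erase_join (Q i0) p1.1.1 p1.2.1 p1.2.2.2, h',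
          TC.erase_join (Q i0) p2.1.1 p2.2.1 p2.2.2.2]
      exact Prod.ext (Subtype.ext hH) (Subtype.ext ht)
    have hBcard : Nat.card {H : SimpleGraph ↥(Q i0) // UnionOfStarsAndTriangles Hᶜ} *
        Nat.card {t : SimpleGraph (Fin n) // (∀ i : Fin (k - 1), (i : ℕ) ≠ 0 →
            IsCliqueGraph (t.induce (Q i))) ∧
          ∀ u v, u ∈ Q i0 → v ∈ Q i0 → ¬ t.Adj u v} ≤ Nat.card ↥Bs :=
      le_of_eq_of_le (Nat.card_prod _ _).symm (Nat.card_le_card_of_injective Ψ hΨ)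
    haveI : Nonempty ↥(Q i0) := by
      rw [← Fintype.card_pos_iff]
      omega
    have hSA : Nat.card {H : SimpleGraph ↥(Q i0) // UnionOfStarsAndTriangles Hᶜ ∧
        {c : Hᶜ.ConnectedComponent | 2 ≤ Nat.card c.supp}.Subsingleton} ≤
        m * (2 ^ m * 2) := by
      have := TC.SA_card (W := ↥(Q i0))
      rw [← hm] at this
      exact this
    have hSB : mhalf.factorial ≤
        Nat.card {H : SimpleGraph ↥(Q i0) // UnionOfStarsAndTriangles Hᶜ} :=
      TC.SB_card mhalf (by rw [← hm]; omega)
    calc As.ncard * 2 ^ n = Nat.card ↥As * 2 ^ n := by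
          rw [Nat.card_coe_set_eq]
      _ ≤ (Nat.card {H : SimpleGraph ↥(Q i0) // UnionOfStarsAndTriangles Hᶜ ∧
            {c : Hᶜ.ConnectedComponent | 2 ≤ Nat.card c.supp}.Subsingleton} *
          Nat.card {t : SimpleGraph (Fin n) // (∀ i : Fin (k - 1), (i : ℕ) ≠ 0 →
              IsCliqueGraph (t.induce (Q i))) ∧
            ∀ u v, u ∈ Q i0 → v ∈ Q i0 → ¬ t.Adj u v}) * 2 ^ n :=
          Nat.mul_le_mul_right _ hAcard
      _ ≤ ((m * (2 ^ m * 2)) *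
          Nat.card {t : SimpleGraph (Fin n) // (∀ i : Fin (k - 1), (i : ℕ) ≠ 0 →
              IsCliqueGraph (t.induce (Q i))) ∧
            ∀ u v, u ∈ Q i0 → v ∈ Q i0 → ¬ t.Adj u v}) * 2 ^ n :=
          Nat.mul_le_mul_right _ (Nat.mul_le_mul_right _ hSA)
      _ = (m * (2 ^ m * 2) * 2 ^ n) *
          Nat.card {t : SimpleGraph (Fin n) // (∀ i : Fin (k - 1), (i : ℕ) ≠ 0 →
              IsCliqueGraph (t.induce (Q i))) ∧
            ∀ u v, u ∈ Q i0 → v ∈ Q i0 → ¬ t.Adj u v} := by ring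
      _ ≤ mhalf.factorial *
          Nat.card {t : SimpleGraph (Fin n) // (∀ i : Fin (k - 1), (i : ℕ) ≠ 0 →
              IsCliqueGraph (t.induce (Q i))) ∧
            ∀ u v, u ∈ Q i0 → v ∈ Q i0 → ¬ t.Adj u v} :=
          Nat.mul_le_mul_right _ harith
      _ ≤ Nat.card {H : SimpleGraph ↥(Q i0) // UnionOfStarsAndTriangles Hᶜ} *
          Nat.card {t : SimpleGraph (Fin n) // (∀ i : Fin (k - 1), (i : ℕ) ≠ 0 →
              IsCliqueGraph (t.induce (Q i))) ∧
            ∀ u v, u ∈ Q i0 → v ∈ Q i0 → ¬ t.Adj u v} :=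
          Nat.mul_le_mul_right _ hSB
      _ ≤ Nat.card ↥Bs := hBcard
      _ = Bs.ncard := Nat.card_coe_set_eq _
  have h2n : (0 : ℝ) < 2 ^ n := by positivity
  rw [Real.rpow_neg (by norm_num : (0:ℝ) ≤ 2), Real.rpow_natCast, inv_mul_eq_div,
    le_div_iff₀ h2n]
  exact_mod_cast main
end

section
/- For every k ≥ 4 there exists μ_0 > 0 such that for every 0 < μ ≤ μ_0 there exists η_0 > 0 such that for every 0 < η ≤ η_0 there exists n_0 ∈ ℕ such that the following holds for all n ≥ n_0. Let Q = (Q_0, {Q_1, …, Q_{k−2}}) be an ordered (k−1)-partition of [n] and suppose G ∈ F_Q(n,k,η,μ). Let I ⊆ {0,1,…,k−2}, and for every i ∈ I let A_i, B_i ⊆ Q_i be disjoint sets with |A_i|, |B_i| ≥ μ^{1/2} n. Let T be a graph on 2|I| vertices having a perfect matching whose edges are v_i u_i for i ∈ I. Then there exists an injection f : V(T) → [n] with f(v_i) ∈ A_i and f(u_i) ∈ B_i for every i ∈ I such that f(V(T)) induces on G a copy of T, i.e. for all distinct x, y ∈ V(T), f(x)f(y) ∈ E(G) if and only if xy ∈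 E(T). -/
open SimpleGraph

section BuildingAux

lemma pairs_card {n : ℕ} (U : Set (Fin n)) (P : Fin n → Fin n → Prop) :
    Nat.card {p : Fin n × Fin n // p.1 ∈ U ∧ P p.1 p.2} =
      ∑ a ∈ (Set.toFinite U).toFinset, {c | P a c}.ncard := by
  classical
  have e : {p : Fin n × Fin n // p.1 ∈ U ∧ P p.1 p.2} ≃
      Σ a : (Set.toFinite U).toFinset, {c : Fin n // P a.1 c} :=
    { toFun := fun p => ⟨⟨p.1.1, by simpa using p.2.1⟩, ⟨p.1.2, p.2.2⟩⟩
      invFun := fun q => ⟨(q.1.1, q.2.1), by simpa using q.1.2, q.2.2⟩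
      left_inv := fun p => rfl
      right_inv := fun q => rfl }
  rw [Nat.card_congr e, Nat.card_eq_fintype_card, Fintype.card_sigma]
  rw [← Finset.sum_coe_sort ((Set.toFinite U).toFinset) (fun a => {c | P a c}.ncard)]
  congr 1
  ext a
  rw [← Nat.card_coe_set_eq, Nat.card_eq_fintype_card]
  rfl


def goodSet {n : ℕ} (G : SimpleGraph (Fin n)) (D : Set (Fin n)) (need : Prop) (a : Fin n) :
    Set (Fin n) := {c ∈ D | G.Adj a c ↔ need}

def badSet {n : ℕ} (G : SimpleGraph (Fin n)) (U D : Set (Fin n)) (need : Prop) : Set (Fin n) :=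
  {a ∈ U | ¬ ((D.ncard : ℝ) ≤ 8 * ((goodSet G D need a).ncard : ℝ))}


lemma bad_cross {n : ℕ} {m : ℕ} (G : SimpleGraph (Fin n)) (Q : Fin m → Set (Fin n))
    (μ : ℝ) (hμ : 0 < μ) (hn : 0 < n)
    (hF1 : ∀ i j : Fin m, i ≠ j → ∀ Ui Uj : Set (Fin n), Ui ⊆ Q i → Uj ⊆ Q j →
      μ ^ 2 * (n : ℝ) ^ 2 ≤ (Ui.ncard : ℝ) * (Uj.ncard : ℝ) →
      (1 / 4 : ℝ) ≤ (eBetween G Ui Uj : ℝ) / ((Ui.ncard : ℝ) * (Uj.ncard : ℝ)) ∧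
        (eBetween G Ui Uj : ℝ) / ((Ui.ncard : ℝ) * (Uj.ncard : ℝ)) ≤ 3 / 4)
    (i j : Fin m) (hij : i ≠ j) (U D : Set (Fin n)) (hU : U ⊆ Q i) (hD : D ⊆ Q j)
    (need : Prop) :
    ((badSet G U D need).ncard : ℝ) * (D.ncard : ℝ) < μ ^ 2 * (n : ℝ) ^ 2 := by
  classical
  by_contra hcon
  push_neg at hcon
  set B := badSet G U D need with hBdef
  have hBQ : B ⊆ Q i := fun a ha => hU ha.1
  have h14 := hF1 i j hij B D hBQ hD hcon
  have hpos : (0:ℝ) < μ ^ 2 * (n : ℝ) ^ 2 := by positivity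
  have hBD : (0:ℝ) < (B.ncard : ℝ) * (D.ncard : ℝ) := lt_of_lt_of_le hpos hcon
  have hBne : ((Set.toFinite B).toFinset).Nonempty := by
    rw [Set.Finite.toFinset_nonempty]
    rcases Set.eq_empty_or_nonempty B with h | h
    · rw [h] at hBD; simp at hBD
    · exact h
  have hBcard : (((Set.toFinite B).toFinset).card : ℝ) = (B.ncard : ℝ) := by
    rw [Set.ncard_eq_toFinset_card B (Set.toFinite B)]
  have he : (eBetween G B D : ℝ)
      = ∑ a ∈ (Set.toFinite B).toFinset, (({c | c ∈ D ∧ G.Adj a c}).ncard : ℝ) := by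
    have := pairs_card B (fun a c => c ∈ D ∧ G.Adj a c)
    rw [show eBetween G B D = Nat.card
      {p : Fin n × Fin n // p.1 ∈ B ∧ (p.2 ∈ D ∧ G.Adj p.1 p.2)} from rfl, this]
    push_cast
    rfl
  have hbadprop : ∀ a ∈ (Set.toFinite B).toFinset,
      8 * (((goodSet G D need a).ncard : ℝ)) < (D.ncard : ℝ) := by
    intro a ha
    rw [Set.Finite.mem_toFinset] at ha
    exact lt_of_not_ge (fun h => ha.2 h)
  by_cases hneed : need
  · -- adjacency required
    have hterm : ∀ a ∈ (Set.toFinite B).toFinset,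
        (({c | c ∈ D ∧ G.Adj a c}).ncard : ℝ) < (D.ncard : ℝ) / 8 := by
      intro a ha
      have hgb := hbadprop a ha
      have : {c | c ∈ D ∧ G.Adj a c} = goodSet G D need a := by
        ext c; simp [goodSet, iff_true_intro hneed]
      rw [this]; linarith
    have hsum : (eBetween G B D : ℝ) < ((Set.toFinite B).toFinset).card * ((D.ncard : ℝ) / 8) := by
      rw [he]
      calc ∑ a ∈ (Set.toFinite B).toFinset, (({c | c ∈ D ∧ G.Adj a c}).ncard : ℝ)
          < ∑ _a ∈ (Set.toFinite B).toFinset, ((D.ncard : ℝ) / 8) :=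
            Finset.sum_lt_sum_of_nonempty hBne hterm
        _ = _ := by rw [Finset.sum_const, nsmul_eq_mul]
    rw [hBcard] at hsum
    have h14' : (1/4 : ℝ) * ((B.ncard : ℝ) * (D.ncard : ℝ)) ≤ (eBetween G B D : ℝ) := by
      have := h14.1
      rw [le_div_iff₀ hBD] at this
      linarith
    nlinarith
  · -- non-adjacency required
    have hterm : ∀ a ∈ (Set.toFinite B).toFinset,
        (7/8 : ℝ) * (D.ncard : ℝ) < (({c | c ∈ D ∧ G.Adj a c}).ncard : ℝ) := by
      intro a ha
      have hgb := hbadprop a ha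
      have hgood : goodSet G D need a = D \ {c | G.Adj a c} := by
        ext c; simp [goodSet, iff_false_intro hneed, Set.mem_diff]
      have hpart := Set.ncard_inter_add_ncard_diff_eq_ncard D {c | G.Adj a c} (Set.toFinite D)
      have hsets : {c | c ∈ D ∧ G.Adj a c} = D ∩ {c | G.Adj a c} := by
        ext c; simp [Set.mem_inter_iff]
      rw [hgood] at hgb
      rw [hsets]
      have : ((D ∩ {c | G.Adj a c}).ncard : ℝ) = (D.ncard : ℝ) - ((D \ {c | G.Adj a c}).ncard : ℝ) := by
        have := hpart
        push_cast [← this]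
        ring
      rw [this]; linarith
    have hsum : ((Set.toFinite B).toFinset).card * ((7/8 : ℝ) * (D.ncard : ℝ)) < (eBetween G B D : ℝ) := by
      rw [he]
      calc ((Set.toFinite B).toFinset).card * ((7/8 : ℝ) * (D.ncard : ℝ))
          = ∑ _a ∈ (Set.toFinite B).toFinset, ((7/8 : ℝ) * (D.ncard : ℝ)) := by
            rw [Finset.sum_const, nsmul_eq_mul]
        _ < _ := Finset.sum_lt_sum_of_nonempty hBne hterm
    rw [hBcard] at hsum
    have h34' : (eBetween G B D : ℝ) ≤ (3/4 : ℝ) * ((B.ncard : ℝ) * (D.ncard : ℝ)) := by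
      have := h14.2
      rw [div_le_iff₀ hBD] at this
      linarith
    nlinarith


lemma bad_same {n m : ℕ} (G : SimpleGraph (Fin n)) (Q : Fin m → Set (Fin n))
    (i : Fin m) (U D : Set (Fin n)) (hU : U ⊆ Q i) (hD : D ⊆ Q i)
    (hdisj : Disjoint U D) (need : Prop) (hneed : need) :
    7 * ((badSet G U D need).ncard : ℝ) * (D.ncard : ℝ) ≤
      8 * (Nat.card ((G.induce (Q i))ᶜ.edgeSet) : ℝ) := by
  classical
  set B := badSet G U D need with hBdef
  have hBU : B ⊆ U := fun a ha => ha.1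
  -- non-adjacent pair count
  set N := Nat.card {p : Fin n × Fin n // p.1 ∈ B ∧ (p.2 ∈ D ∧ ¬ G.Adj p.1 p.2)} with hNdef
  have hBcard : (((Set.toFinite B).toFinset).card : ℝ) = (B.ncard : ℝ) := by
    rw [Set.ncard_eq_toFinset_card B (Set.toFinite B)]
  have hNsum : (N : ℝ) = ∑ a ∈ (Set.toFinite B).toFinset,
      (({c | c ∈ D ∧ ¬ G.Adj a c}).ncard : ℝ) := by
    rw [hNdef, pairs_card B (fun a c => c ∈ D ∧ ¬ G.Adj a c)]
    push_cast
    rfl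
  have hterm : ∀ a ∈ (Set.toFinite B).toFinset,
      (7/8 : ℝ) * (D.ncard : ℝ) ≤ (({c | c ∈ D ∧ ¬ G.Adj a c}).ncard : ℝ) := by
    intro a ha
    rw [Set.Finite.mem_toFinset] at ha
    have hgb : 8 * (((goodSet G D need a).ncard : ℝ)) < (D.ncard : ℝ) :=
      lt_of_not_ge (fun h => ha.2 h)
    have hgood : goodSet G D need a = D ∩ {c | G.Adj a c} := by
      ext c; simp [goodSet, iff_true_intro hneed, Set.mem_inter_iff]
    have hsets : {c | c ∈ D ∧ ¬ G.Adj a c} = D \ {c | G.Adj a c} := by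
      ext c; simp [Set.mem_diff]
    have hpart := Set.ncard_inter_add_ncard_diff_eq_ncard D {c | G.Adj a c} (Set.toFinite D)
    rw [hgood] at hgb
    rw [hsets]
    have hre : ((D \ {c | G.Adj a c}).ncard : ℝ)
        = (D.ncard : ℝ) - ((D ∩ {c | G.Adj a c}).ncard : ℝ) := by
      push_cast [← hpart]; ring
    rw [hre]; linarith
  have hlow : (7/8 : ℝ) * ((B.ncard : ℝ) * (D.ncard : ℝ)) ≤ (N : ℝ) := by
    rw [hNsum]
    calc (7/8 : ℝ) * ((B.ncard : ℝ) * (D.ncard : ℝ))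
        = ∑ _a ∈ (Set.toFinite B).toFinset, ((7/8 : ℝ) * (D.ncard : ℝ)) := by
          rw [Finset.sum_const, nsmul_eq_mul, hBcard]; ring
      _ ≤ _ := Finset.sum_le_sum hterm
  -- injection into edge set of complement of induced graph
  have hinj : N ≤ Nat.card ((G.induce (Q i))ᶜ.edgeSet) := by
    have hne : ∀ (p : {p : Fin n × Fin n // p.1 ∈ B ∧ (p.2 ∈ D ∧ ¬ G.Adj p.1 p.2)}),
        s(⟨p.1.1, hU (hBU p.2.1)⟩, (⟨p.1.2, hD p.2.2.1⟩ : ↥(Q i)))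
          ∈ (G.induce (Q i))ᶜ.edgeSet := by
      intro p
      rw [SimpleGraph.mem_edgeSet]
      have hne' : p.1.1 ≠ p.1.2 := by
        intro h
        exact (Set.disjoint_left.mp hdisj (hBU p.2.1)) (h ▸ p.2.2.1)
      constructor
      · intro h; exact hne' (congrArg Subtype.val h)
      · simpa using p.2.2.2
    let φ : {p : Fin n × Fin n // p.1 ∈ B ∧ (p.2 ∈ D ∧ ¬ G.Adj p.1 p.2)} →
        ((G.induce (Q i))ᶜ.edgeSet) := fun p => ⟨_, hne p⟩
    have hφ : Function.Injective φ := by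
      intro p q hpq
      have h2 : s((⟨p.1.1, hU (hBU p.2.1)⟩ : ↥(Q i)), (⟨p.1.2, hD p.2.2.1⟩ : ↥(Q i)))
          = s((⟨q.1.1, hU (hBU q.2.1)⟩ : ↥(Q i)), (⟨q.1.2, hD q.2.2.1⟩ : ↥(Q i))) :=
        congrArg Subtype.val hpq
      rw [Sym2.eq_iff] at h2
      rcases h2 with ⟨h3, h4⟩ | ⟨h3, h4⟩
      · have e1 : p.1.1 = q.1.1 := congrArg Subtype.val h3
        have e2 : p.1.2 = q.1.2 := congrArg Subtype.val h4
        exact Subtype.ext (Prod.ext e1 e2)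
      · exfalso
        have e1 : p.1.1 = q.1.2 := congrArg Subtype.val h3
        exact (Set.disjoint_left.mp hdisj (hBU p.2.1)) (e1 ▸ q.2.2.1)
    exact Nat.card_le_card_of_injective φ hφ
  have : (N : ℝ) ≤ (Nat.card ((G.induce (Q i))ᶜ.edgeSet) : ℝ) := by exact_mod_cast hinj
  linarith

lemma ncard_biUnion_le {α ι : Type*} (E : Finset ι) (S : ι → Set α) [Finite α] :
    (⋃ w ∈ E, S w).ncard ≤ ∑ w ∈ E, (S w).ncard := by
  classical
  induction E using Finset.induction with
  | empty => simp
  | insert _ _ h ih =>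
    rename_i a s
    rw [Finset.set_biUnion_insert, Finset.sum_insert h]
    exact le_trans (Set.ncard_union_le _ _) (by omega)

lemma partner_adj {m : ℕ} (I : Set (Fin m)) (T : SimpleGraph (I × Bool))
    (hT : ∀ i : I, T.Adj (i, true) (i, false))
    (v w : I × Bool) (h1 : w.1 = v.1) (h2 : w.2 ≠ v.2) : T.Adj w v := by
  obtain ⟨w1, w2⟩ := w
  obtain ⟨v1, v2⟩ := v
  dsimp at h1 h2
  subst h1
  cases w2 <;> cases v2 <;> simp at h2 ⊢
  · exact (hT w1).symm
  · exact hT w1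


lemma main_step {n k : ℕ} (hn : 0 < n) (μ η : ℝ) (hμ : 0 < μ) (hη : 0 ≤ η)
    (G : SimpleGraph (Fin n)) (Q : Fin (k-1) → Set (Fin n))
    (hIE : (internalNonEdges k G Q : ℝ) ≤ η * n ^ 2)
    (hF1 : PropF1 k μ G Q)
    (I : Set (Fin (k-1)))
    (T : SimpleGraph (I × Bool))
    (hT : ∀ i : I, T.Adj (i, true) (i, false))
    (base : I × Bool → Set (Fin n))
    (hbaseQ : ∀ v, base v ⊆ Q v.1.1)
    (hbasedisj : ∀ v w : I × Bool, v ≠ w → Disjoint (base v) (base w))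
    (hsmall : 2 * (k:ℝ) * (μ^2 + 2*η) < μ / (8:ℝ)^(4*k)) :
    ∀ (R : Finset (I × Bool)) (C : I × Bool → Set (Fin n)) (f : I × Bool → Fin n),
      (∀ v ∈ R, C v ⊆ base v) →
      (∀ v ∈ R, Real.sqrt μ * n * 8^(R.card) / 8^(2*k) ≤ ((C v).ncard : ℝ)) →
      (∀ v ∈ R, ∀ c ∈ C v, ∀ u, u ∉ R → (G.Adj c (f u) ↔ T.Adj v u)) →
      (∀ u, u ∉ R → f u ∈ base u) →
      (∀ u, u ∉ R → ∀ u', u' ∉ R → u ≠ u' → (G.Adj (f u) (f u') ↔ T.Adj u u')) →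
      ∃ g : I × Bool → Fin n,
        (∀ u, g u ∈ base u) ∧
        (∀ u u' : I × Bool, u ≠ u' → (G.Adj (g u) (g u') ↔ T.Adj u u')) := by
  classical
  set δ : ℝ := Real.sqrt μ / 8^(2*k) with hδdef
  have hsqrtpos : 0 < Real.sqrt μ := Real.sqrt_pos.mpr hμ
  have hδpos : 0 < δ := by positivity
  have hδsq : δ^2 = μ / 8^(4*k) := by
    rw [hδdef, div_pow, Real.sq_sqrt hμ.le, ← pow_mul]
    norm_num
    ring_nf
  intro R
  induction R using Finset.strongInduction with
  | _ R ih =>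
    intro C f hC1 hC2 hcompat hf1 hf2
    rcases R.eq_empty_or_nonempty with rfl | ⟨v, hv⟩
    · exact ⟨f, fun u => hf1 u (by simp),
        fun u u' h => hf2 u (by simp) u' (by simp) h⟩
    · set E := R.erase v with hEdef
      have hEss : E ⊂ R := Finset.erase_ssubset hv
      have hcardE : E.card + 1 = R.card := Finset.card_erase_add_one hv
      have hpowR : (8:ℝ)^(R.card) = 8^(E.card) * 8 := by
        rw [← hcardE, pow_succ]
      -- all candidate sets in R have size ≥ δ * n
      have hCn : ∀ w ∈ R, δ * n ≤ ((C w).ncard : ℝ) := by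
        intro w hw
        have h1 : (1:ℝ) ≤ 8^(R.card) := one_le_pow₀ (by norm_num)
        have h2 : Real.sqrt μ * n ≤ Real.sqrt μ * n * 8^(R.card) :=
          le_mul_of_one_le_right (by positivity) h1
        calc δ * n = Real.sqrt μ * n / 8^(2*k) := by rw [hδdef]; ring
          _ ≤ Real.sqrt μ * n * 8^(R.card) / 8^(2*k) := by gcongr
          _ ≤ _ := hC2 w hw
      -- define need and bad sets
      set needP : I × Bool → Prop := fun w => T.Adj w v with hneedP
      set Bad : I × Bool → Set (Fin n) := fun w => badSet G (C v) (C w) (needP w) with hBad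
      -- per-w bad bound
      have hband : ∀ w ∈ E, ((Bad w).ncard : ℝ) * (δ * n) ≤ (μ^2 + 2*η) * n^2 := by
        intro w hw
        have hwR : w ∈ R := (Finset.mem_erase.mp hw).2
        have hwv : w ≠ v := (Finset.mem_erase.mp hw).1
        have hCwn : δ * n ≤ ((C w).ncard : ℝ) := hCn w hwR
        have hCvQ : C v ⊆ Q v.1.1 := (hC1 v hv).trans (hbaseQ v)
        have hCwQ : C w ⊆ Q w.1.1 := (hC1 w hwR).trans (hbaseQ w)
        have hBadn : (0:ℝ) ≤ ((Bad w).ncard : ℝ) := Nat.cast_nonneg _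
        by_cases hiw : w.1 = v.1
        · -- same part: partner
          have hne2 : w.2 ≠ v.2 := by
            intro h2; exact hwv (Prod.ext hiw h2)
          have hneed : needP w := partner_adj I T hT v w hiw hne2
          have hdisj : Disjoint (C v) (C w) :=
            (hbasedisj v w (Ne.symm hwv)).mono (hC1 v hv) (hC1 w hwR)
          have hCwQ' : C w ⊆ Q v.1.1 := by rw [← hiw]; exact hCwQ
          have h7 := bad_same G Q v.1.1 (C v) (C w) hCvQ hCwQ' hdisj (needP w) hneed
          have hedge : (Nat.card ((G.induce (Q v.1.1))ᶜ.edgeSet) : ℝ)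
              ≤ η * n^2 := by
            refine le_trans ?_ hIE
            have : Nat.card ((G.induce (Q v.1.1))ᶜ.edgeSet) ≤ internalNonEdges k G Q :=
              Finset.single_le_sum (f := fun i => Nat.card ((G.induce (Q i))ᶜ.edgeSet))
                (fun i _ => Nat.zero_le _) (Finset.mem_univ v.1.1)
            exact_mod_cast this
          -- 7 * Bad * |Cw| ≤ 8 η n², |Cw| ≥ δ n
          have h8 : ((Bad w).ncard : ℝ) * (δ * n) ≤ ((Bad w).ncard : ℝ) * ((C w).ncard : ℝ) :=
            mul_le_mul_of_nonneg_left hCwn hBadn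
          nlinarith
        · -- cross part
          have hij : v.1.1 ≠ w.1.1 := by
            intro h; exact hiw (Subtype.ext h).symm
          have hlt := bad_cross G Q μ hμ hn hF1 v.1.1 w.1.1 hij (C v) (C w) hCvQ hCwQ (needP w)
          have h8 : ((Bad w).ncard : ℝ) * (δ * n) ≤ ((Bad w).ncard : ℝ) * ((C w).ncard : ℝ) :=
            mul_le_mul_of_nonneg_left hCwn hBadn
          nlinarith
      -- number of w's
      haveI : Fintype ↥I := Fintype.ofFinite _
      have hEcard : (E.card : ℝ) ≤ 2 * (k:ℝ) := by
        have h1 : E.card ≤ Fintype.card (↥I × Bool) := Finset.card_le_univ E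
        have h2 : Fintype.card (↥I × Bool) = Fintype.card ↥I * 2 := by simp
        have h3 : Nat.card ↥I ≤ k - 1 := by
          have := Nat.card_le_card_of_injective (Subtype.val : ↥I → Fin (k-1))
            Subtype.val_injective
          simpa using this
        have h4 : Fintype.card ↥I = Nat.card ↥I := (Nat.card_eq_fintype_card).symm
        have h5 : E.card ≤ (k-1) * 2 := by omega
        have h6 : (k - 1) * 2 ≤ 2 * k := by omega
        exact_mod_cast le_trans h5 h6
      -- find a good vertex a
      have hgood : ∃ a ∈ C v, ∀ w ∈ E, a ∉ Bad w := by
        by_contra hno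
        push_neg at hno
        have hsub : C v ⊆ ⋃ w ∈ E, Bad w := by
          intro a ha
          obtain ⟨w, hw1, hw2⟩ := hno a ha
          exact Set.mem_biUnion hw1 hw2
        have hle : ((C v).ncard : ℝ) ≤ ∑ w ∈ E, ((Bad w).ncard : ℝ) := by
          have h1 : (C v).ncard ≤ (⋃ w ∈ E, Bad w).ncard :=
            Set.ncard_le_ncard hsub (Set.toFinite _)
          have h2 := ncard_biUnion_le E Bad
          push_cast
          exact_mod_cast le_trans h1 h2
        have hsumle : (∑ w ∈ E, ((Bad w).ncard : ℝ)) * (δ * n) ≤ (E.card : ℝ) * ((μ^2 + 2*η) * n^2) := by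
          rw [Finset.sum_mul]
          calc ∑ w ∈ E, ((Bad w).ncard : ℝ) * (δ * n) ≤ ∑ _w ∈ E, (μ^2 + 2*η) * n^2 :=
                Finset.sum_le_sum hband
            _ = (E.card : ℝ) * ((μ^2 + 2*η) * n^2) := by
                rw [Finset.sum_const, nsmul_eq_mul]
        have hCvn : δ * n ≤ ((C v).ncard : ℝ) := hCn v hv
        have hnpos : (0:ℝ) < n := by exact_mod_cast hn
        have hfin : False := by
          have e1 : (δ*n)^2 ≤ ((C v).ncard : ℝ) * (δ * n) := by
            rw [sq]
            exact mul_le_mul_of_nonneg_right hCvn (by positivity)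
          have e2 : ((C v).ncard : ℝ) * (δ * n) ≤ (E.card : ℝ) * ((μ^2 + 2*η) * n^2) := by
            calc ((C v).ncard : ℝ) * (δ * n) ≤ (∑ w ∈ E, ((Bad w).ncard : ℝ)) * (δ * n) :=
                  mul_le_mul_of_nonneg_right hle (by positivity)
              _ ≤ _ := hsumle
          have e3 : (E.card : ℝ) * ((μ^2 + 2*η) * n^2) ≤ 2*(k:ℝ) * ((μ^2 + 2*η) * n^2) := by
            have : (0:ℝ) ≤ (μ^2 + 2*η) * n^2 := by positivity
            nlinarith
          have e4 : 2*(k:ℝ) * ((μ^2 + 2*η) * n^2) < (μ / 8^(4*k)) * n^2 := by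
            have hn2 : (0:ℝ) < (n:ℝ)^2 := by positivity
            have h := mul_lt_mul_of_pos_right hsmall hn2
            ring_nf at h ⊢
            linarith
          have e5 : (μ / 8^(4*k)) * (n:ℝ)^2 = (δ*n)^2 := by
            rw [mul_pow, hδsq]
          linarith
        exact hfin.elim
      obtain ⟨a, haCv, hagood⟩ := hgood
      -- new data
      set C' : I × Bool → Set (Fin n) := fun w => goodSet G (C w) (needP w) a with hC'
      set f' : I × Bool → Fin n := Function.update f v a with hf'
      have hfv : f' v = a := Function.update_self v a f
      have hfu : ∀ u, u ≠ v → f' u = f u := fun u hu => Function.update_of_ne hu a f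
      have hmemE : ∀ u, u ∉ E → u ≠ v → u ∉ R := by
        intro u huE huv hur
        exact huE (Finset.mem_erase.mpr ⟨huv, hur⟩)
      have hEsubR : ∀ w ∈ E, w ∈ R := fun w hw => (Finset.mem_erase.mp hw).2
      -- invariants for the smaller set
      have hC1' : ∀ w ∈ E, C' w ⊆ base w := by
        intro w hw c hc
        exact hC1 w (hEsubR w hw) hc.1
      have hC2' : ∀ w ∈ E, Real.sqrt μ * n * 8^(E.card) / 8^(2*k) ≤ ((C' w).ncard : ℝ) := by
        intro w hw
        have hnb : a ∉ Bad w := hagood w hw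
        have hle8 : ((C w).ncard : ℝ) ≤ 8 * ((C' w).ncard : ℝ) := by
          by_contra hcon
          exact hnb ⟨haCv, fun h => hcon h⟩
        have := hC2 w (hEsubR w hw)
        rw [hpowR] at this
        have h8 : Real.sqrt μ * n * (8^(E.card) * 8) / 8^(2*k)
            = 8 * (Real.sqrt μ * n * 8^(E.card) / 8^(2*k)) := by ring
        rw [h8] at this
        linarith
      have hcompat' : ∀ w ∈ E, ∀ c ∈ C' w, ∀ u, u ∉ E → (G.Adj c (f' u) ↔ T.Adj w u) := by
        intro w hw c hc u hu
        by_cases huv : u = v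
        · rw [huv, hfv]
          have : G.Adj a c ↔ needP w := hc.2
          rw [G.adj_comm]
          rw [hneedP] at this
          exact this
        · rw [hfu u huv]
          exact hcompat w (hEsubR w hw) c hc.1 u (hmemE u hu huv)
      have hf1' : ∀ u, u ∉ E → f' u ∈ base u := by
        intro u hu
        by_cases huv : u = v
        · rw [huv, hfv]; exact hC1 v hv haCv
        · rw [hfu u huv]; exact hf1 u (hmemE u hu huv)
      have hf2' : ∀ u, u ∉ E → ∀ u', u' ∉ E → u ≠ u' → (G.Adj (f' u) (f' u') ↔ T.Adj u u') := by
        intro u hu u' hu' huu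
        by_cases huv : u = v
        · have hu'v : u' ≠ v := fun h => huu (huv.trans h.symm)
          rw [huv, hfv, hfu u' hu'v]
          exact hcompat v hv a haCv u' (hmemE u' hu' hu'v)
        · by_cases hu'v : u' = v
          · rw [hu'v, hfv, hfu u huv]
            rw [G.adj_comm, T.adj_comm]
            exact hcompat v hv a haCv u (hmemE u hu huv)
          · rw [hfu u huv, hfu u' hu'v]
            exact hf2 u (hmemE u hu huv) u' (hmemE u' hu' hu'v) huu
      exact ih E hEss C' f' hC1' hC2' hcompat' hf1' hf2'

end BuildingAux

/-- (Proposition: building.) For suitable `1/n ≪ η ≪ μ ≪ 1/k`, given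
`G ∈ F_Q(n,k,η,μ)`, `I ⊆ {0,…,k−2}`, disjoint sets `A_i, B_i ⊆ Q_i` of size at least
`μ^{1/2}n`, and a graph `T` on vertex set `I × Bool` containing the perfect matching
`{(i,true)(i,false) : i ∈ I}`, there is an induced embedding of `T` into `G` placing
`(i,true)` in `A_i` and `(i,false)` in `B_i`. -/
theorem building (k : ℕ) (hk : 4 ≤ k) :
    ∃ μ0 : ℝ, 0 < μ0 ∧ ∀ μ : ℝ, 0 < μ → μ ≤ μ0 →
      ∃ η0 : ℝ, 0 < η0 ∧ ∀ η : ℝ, 0 < η → η ≤ η0 →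
        ∃ n0 : ℕ, ∀ n : ℕ, n0 ≤ n →
          ∀ (Q : Fin (k - 1) → Set (Fin n)) (G : SimpleGraph (Fin n)),
            MemFQetaMu k η μ G Q →
            ∀ (I : Set (Fin (k - 1))) (A B : Fin (k - 1) → Set (Fin n)),
              (∀ i ∈ I, A i ⊆ Q i ∧ B i ⊆ Q i ∧ Disjoint (A i) (B i) ∧
                Real.sqrt μ * (n : ℝ) ≤ ((A i).ncard : ℝ) ∧
                Real.sqrt μ * (n : ℝ) ≤ ((B i).ncard : ℝ)) →
              ∀ T : SimpleGraph (I × Bool),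
                (∀ i : I, T.Adj (i, true) (i, false)) →
                ∃ f : I × Bool → Fin n, Function.Injective f ∧
                  (∀ i : I, f (i, true) ∈ A i.1 ∧ f (i, false) ∈ B i.1) ∧
                  (∀ x y : I × Bool, x ≠ y → (G.Adj (f x) (f y) ↔ T.Adj x y)) := by
  classical
  have hk8 : (0:ℝ) < (8:ℝ)^(4*k) := by positivity
  have hkpos : (0:ℝ) < (k:ℝ) := by
    have : (4:ℝ) ≤ (k:ℝ) := by exact_mod_cast hk
    linarith
  refine ⟨1 / ((8:ℝ)^(4*k+1) * k), by positivity, ?_⟩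
  intro μ hμ hμ0
  refine ⟨μ / ((8:ℝ)^(4*k+1) * k), by positivity, ?_⟩
  intro η hη hη0
  refine ⟨1, ?_⟩
  intro n hn Q G hG I A B hAB T hT
  obtain ⟨⟨hfree, hopt, hIE⟩, hF1, hF2⟩ := hG
  have hQpart : IsPartition Q := hopt.1
  have hn0 : 0 < n := hn
  -- numerical smallness
  have hsmall : 2 * (k:ℝ) * (μ^2 + 2*η) < μ / (8:ℝ)^(4*k) := by
    have hden : (0:ℝ) < (8:ℝ)^(4*k+1) * k := by positivity
    have h1 : μ * ((8:ℝ)^(4*k+1) * k) ≤ 1 := by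
      rw [← le_div_iff₀ hden]; exact hμ0
    have h2 : η * ((8:ℝ)^(4*k+1) * k) ≤ μ := by
      rw [← le_div_iff₀ hden]; exact hη0
    have hps : (8:ℝ)^(4*k+1) = (8:ℝ)^(4*k) * 8 := pow_succ 8 (4*k)
    rw [hps] at h1 h2
    rw [lt_div_iff₀ hk8]
    have h3 : μ * (μ * ((8:ℝ)^(4*k) * 8 * k)) ≤ μ * 1 :=
      mul_le_mul_of_nonneg_left h1 hμ.le
    nlinarith [h2, hμ, hη, hkpos, hk8]
  -- the base sets
  haveI : Fintype ↥I := Fintype.ofFinite _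
  set base : I × Bool → Set (Fin n) := fun v => if v.2 = true then A v.1.1 else B v.1.1
    with hbase
  have hbt : ∀ i : I, base (i, true) = A i.1 := fun i => by simp [hbase]
  have hbf : ∀ i : I, base (i, false) = B i.1 := fun i => by simp [hbase]
  have hbaseQ : ∀ v : I × Bool, base v ⊆ Q v.1.1 := by
    rintro ⟨i, b⟩
    obtain ⟨hA1, hB1, hABd, hAn, hBn⟩ := hAB i.1 i.2
    cases b
    · rw [hbf]; exact hB1
    · rw [hbt]; exact hA1
  have hbasen : ∀ v : I × Bool, Real.sqrt μ * n ≤ ((base v).ncard : ℝ) := by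
    rintro ⟨i, b⟩
    obtain ⟨hA1, hB1, hABd, hAn, hBn⟩ := hAB i.1 i.2
    cases b
    · rw [hbf]; exact hBn
    · rw [hbt]; exact hAn
  have hQdisj : ∀ i j : Fin (k-1), i ≠ j → Disjoint (Q i) (Q j) := by
    intro i j hij
    rw [Set.disjoint_left]
    intro x hxi hxj
    obtain ⟨c, _, hu⟩ := hQpart x
    exact hij ((hu i hxi).trans (hu j hxj).symm)
  have hbasedisj : ∀ v w : I × Bool, v ≠ w → Disjoint (base v) (base w) := by
    rintro ⟨i, b⟩ ⟨j, b'⟩ hne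
    by_cases hij : i = j
    · subst hij
      have hbb : b ≠ b' := by
        intro h; exact hne (by rw [h])
      obtain ⟨hA1, hB1, hABd, hAn, hBn⟩ := hAB i.1 i.2
      cases b <;> cases b'
      · exact absurd rfl hbb
      · rw [hbf i, hbt i]; exact hABd.symm
      · rw [hbt i, hbf i]; exact hABd
      · exact absurd rfl hbb
    · have hij1 : i.1 ≠ j.1 := fun h => hij (Subtype.ext h)
      exact (hQdisj i.1 j.1 hij1).mono (hbaseQ (i, b)) (hbaseQ (j, b'))
  -- initial data for the induction
  have hucard : ((Finset.univ : Finset (I × Bool)).card : ℕ) ≤ 2*k := by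
    rw [Finset.card_univ]
    have h2 : Fintype.card (↥I × Bool) = Fintype.card ↥I * 2 := by simp
    have h3 : Nat.card ↥I ≤ k - 1 := by
      have := Nat.card_le_card_of_injective (Subtype.val : ↥I → Fin (k-1))
        Subtype.val_injective
      simpa using this
    have h4 : Fintype.card ↥I = Nat.card ↥I := (Nat.card_eq_fintype_card).symm
    omega
  have hC2init : ∀ v ∈ (Finset.univ : Finset (I × Bool)),
      Real.sqrt μ * n * 8^((Finset.univ : Finset (I × Bool)).card) / 8^(2*k)
        ≤ (((base v).ncard : ℕ) : ℝ) := by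
    intro v _
    have hple : (8:ℝ)^((Finset.univ : Finset (I × Bool)).card) ≤ 8^(2*k) :=
      pow_le_pow_right₀ (by norm_num) hucard
    have h0 : (0:ℝ) ≤ Real.sqrt μ * n := by positivity
    calc Real.sqrt μ * n * 8^((Finset.univ : Finset (I × Bool)).card) / 8^(2*k)
        ≤ Real.sqrt μ * n * 8^(2*k) / 8^(2*k) := by gcongr
      _ = Real.sqrt μ * n := by
          rw [mul_div_assoc, div_self (by positivity : ((8:ℝ)^(2*k)) ≠ 0), mul_one]
      _ ≤ _ := hbasen v
  have hmain := main_step hn0 μ η hμ hη.le G Q hIE hF1 I T hT base hbaseQ hbasedisj hsmall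
    Finset.univ base (fun _ => (⟨0, hn0⟩ : Fin n))
    (fun v _ => le_refl _) hC2init
    (fun v _ c _ u hu => absurd (Finset.mem_univ u) hu)
    (fun u hu => absurd (Finset.mem_univ u) hu)
    (fun u hu => absurd (Finset.mem_univ u) hu)
  obtain ⟨g, hg1, hg2⟩ := hmain
  refine ⟨g, ?_, ?_, ?_⟩
  · intro x y hxy
    by_contra hne
    have hx := hg1 x
    have hy := hg1 y
    rw [← hxy] at hy
    exact Set.disjoint_left.mp (hbasedisj x y hne) hx hy
  · intro i
    constructor
    · have := hg1 (i, true); rwa [hbt] at this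
    · have := hg1 (i, false); rwa [hbf] at this
  · exact hg2
end
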